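/- arXiv:quant-ph/0511069 — 4 statements merged into one kernel-verified Lean document; each statement's English description precedes it below -/
import Mathlib

section
/- For every finite simple graph G with at least one edge, cc(G) = tw(L(G)), where L(G) is the line graph of G. -/
/-- A tree decomposition of a finite simple graph `G`. -/
structure TreeDecomp {V : Type} [Fintype V] (G : SimpleGraph V) : Type 1 where
  ι : Type
  instFin : Fintype ι
  T : SimpleGraph ι
  isTree : T.IsTree
  bag : ι → Finset V
  bag_cover : ∀ v : V, ∃ t : ι, v ∈ bag t
  bag_edge : ∀ u v : V, G.Adj u v → ∃ t : ι, u ∈ bag t ∧ v ∈ bag t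
  bag_conn : ∀ v : V, (T.induce {t : ι | v ∈ bag t}).Connected

/-- The width of a tree decomposition: `max_t |B_t| - 1`. -/
noncomputable def TreeDecomp.width {V : Type} [Fintype V] {G : SimpleGraph V}
    (D : TreeDecomp G) : ℕ :=
  (@Finset.univ D.ι D.instFin).sup (fun t => (D.bag t).card) - 1

/-- The treewidth of a finite simple graph. -/
noncomputable def treewidth {V : Type} [Fintype V] (G : SimpleGraph V) : ℕ :=
  sInf {n : ℕ | ∃ D : TreeDecomp G, D.width = n}


/-- The degree of the merged vertex created when, after the edges in `done` (which ends with
the edge `e` just contracted) have been contracted, we count the edges of `G` not yet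
contracted having at least one endpoint in the connected component (of the spanning subgraph
with edge set `done`) containing the endpoints of `e`. -/
noncomputable def mergedDeg {V : Type} (G : SimpleGraph V) (done : List (Sym2 V))
    (e : Sym2 V) : ℕ :=
  Set.ncard {f : Sym2 V | f ∈ G.edgeSet ∧ f ∉ done ∧
    ∃ x ∈ f, ∃ y ∈ e, (SimpleGraph.fromEdgeSet {g : Sym2 V | g ∈ done}).Reachable x y}

/-- The complexity of a contraction ordering, given as a list of edges: the maximum over all
steps `i` of the degree of the vertex obtained by contracting the `i`-th edge. -/
noncomputable def listComplexity {V : Type} (G : SimpleGraph V) (l : List (Sym2 V)) : ℕ :=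
  Finset.univ.sup (fun i : Fin l.length => mergedDeg G (l.take (i + 1)) (l.get i))

/-- `l` is an ordering of the edge set of `G`. -/
def IsEdgeOrder {V : Type} (G : SimpleGraph V) (l : List (Sym2 V)) : Prop :=
  l.Nodup ∧ ∀ e : Sym2 V, e ∈ l ↔ e ∈ G.edgeSet

/-- The contraction complexity of `G`: the minimum complexity of a contraction ordering. -/
noncomputable def cc {V : Type} (G : SimpleGraph V) : ℕ :=
  sInf {n : ℕ | ∃ l : List (Sym2 V), IsEdgeOrder G l ∧ listComplexity G l = n}


set_option linter.unusedSectionVars false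
set_option maxHeartbeats 1600000

namespace CCAux

open SimpleGraph

variable {ι : Type} [DecidableEq ι] {T : SimpleGraph ι}

/-- The unique path between two vertices of a tree. -/
noncomputable def pw (hT : T.IsTree) (a b : ι) : T.Walk a b :=
  (hT.existsUnique_path a b).choose

lemma pw_isPath (hT : T.IsTree) (a b : ι) : (pw hT a b).IsPath :=
  (hT.existsUnique_path a b).choose_spec.1

lemma pw_unique (hT : T.IsTree) {a b : ι} (p : T.Walk a b) (hp : p.IsPath) :
    p = pw hT a b :=
  (hT.existsUnique_path a b).choose_spec.2 p hp

/-- Length of the unique path; plays the role of tree distance. -/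
noncomputable def len (hT : T.IsTree) (a b : ι) : ℕ := (pw hT a b).length

lemma support_pw_subset (hT : T.IsTree) {a b : ι} (w : T.Walk a b) :
    (pw hT a b).support ⊆ w.support := by
  have hbp : w.bypass = pw hT a b := pw_unique hT _ w.bypass_isPath
  rw [← hbp]; exact w.support_bypass_subset

lemma len_eq_zero_iff (hT : T.IsTree) {a b : ι} : len hT a b = 0 ↔ a = b := by
  constructor
  · exact fun h => SimpleGraph.Walk.eq_of_length_eq_zero h
  · rintro rfl
    have : (SimpleGraph.Walk.nil : T.Walk a a) = pw hT a a :=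
      pw_unique hT _ SimpleGraph.Walk.IsPath.nil
    simp [len, ← this]

lemma takeUntil_pw (hT : T.IsTree) {a b t : ι} (h : t ∈ (pw hT a b).support) :
    (pw hT a b).takeUntil t h = pw hT a t :=
  pw_unique hT _ ((pw_isPath hT a b).takeUntil h)

lemma dropUntil_pw (hT : T.IsTree) {a b t : ι} (h : t ∈ (pw hT a b).support) :
    (pw hT a b).dropUntil t h = pw hT t b :=
  pw_unique hT _ ((pw_isPath hT a b).dropUntil h)

lemma len_split (hT : T.IsTree) {a b t : ι} (h : t ∈ (pw hT a b).support) :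
    len hT a t + len hT t b = len hT a b := by
  have := SimpleGraph.Walk.take_spec (pw hT a b) h
  have hlen := congrArg SimpleGraph.Walk.length this
  rw [SimpleGraph.Walk.length_append, takeUntil_pw hT h, dropUntil_pw hT h] at hlen
  exact hlen

/-- Transitivity of "being below" along root paths. -/
lemma mem_pw_trans (hT : T.IsTree) {r t u s : ι} (h1 : t ∈ (pw hT r u).support)
    (h2 : u ∈ (pw hT r s).support) : t ∈ (pw hT r s).support := by
  have : (pw hT r s).takeUntil u h2 = pw hT r u := takeUntil_pw hT h2
  have hsub := SimpleGraph.Walk.support_takeUntil_subset (pw hT r s) h2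
  rw [this] at hsub
  exact hsub h1

lemma mem_pw_of_not_mem (hT : T.IsTree) {r s s' t : ι}
    (h1 : t ∈ (pw hT r s).support) (h2 : t ∉ (pw hT r s').support) :
    t ∈ (pw hT s' s).support := by
  have hsub := support_pw_subset hT ((pw hT r s').append (pw hT s' s))
  have := hsub h1
  rw [SimpleGraph.Walk.support_append] at this
  rcases List.mem_append.mp this with h | h
  · exact absurd h h2
  · exact List.mem_of_mem_tail h

lemma len_adj (hT : T.IsTree) {a b : ι} (h : T.Adj a b) : len hT a b = 1 := by
  have : (SimpleGraph.Walk.cons h SimpleGraph.Walk.nil) = pw hT a b := by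
    refine pw_unique hT _ ?_
    simp [SimpleGraph.Walk.cons_isPath_iff, h.ne]
  simp [len, ← this]

/-- For adjacent vertices, one lies on the root path of the other. -/
lemma adj_dichotomy (hT : T.IsTree) (r : ι) {z z' : ι} (h : T.Adj z z') :
    z ∈ (pw hT r z').support ∨ z' ∈ (pw hT r z).support := by
  by_cases hz : z ∈ (pw hT r z').support
  · exact Or.inl hz
  · right
    have hpath : ((SimpleGraph.Walk.cons h (pw hT r z').reverse).reverse).IsPath := by
      refine SimpleGraph.Walk.IsPath.reverse ?_
      rw [SimpleGraph.Walk.cons_isPath_iff]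
      refine ⟨(pw_isPath hT r z').reverse, ?_⟩
      rw [SimpleGraph.Walk.support_reverse, List.mem_reverse]
      exact hz
    have := pw_unique hT _ hpath
    rw [← this, SimpleGraph.Walk.support_reverse, List.mem_reverse]
    simp [SimpleGraph.Walk.support_cons]


/-- The support of the unique path between members of a connected induced set stays in the set. -/
lemma pw_support_subset_of_connected (hT : T.IsTree) {S : Set ι}
    (hconn : (T.induce S).Connected) {a b : ι} (ha : a ∈ S) (hb : b ∈ S) :
    ∀ t ∈ (pw hT a b).support, t ∈ S := by
  obtain ⟨w⟩ := hconn.preconnected ⟨a, ha⟩ ⟨b, hb⟩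
  have wT : T.Walk a b := w.map (SimpleGraph.Embedding.induce S).toHom
  intro t ht
  have hsub := support_pw_subset hT (w.map (SimpleGraph.Embedding.induce S).toHom)
  have := hsub ht
  rw [SimpleGraph.Walk.support_map] at this
  obtain ⟨x, _, rfl⟩ := List.mem_map.mp this
  exact x.2

lemma reach_invariant (hT : T.IsTree) (r : ι) {S : Set ι} {u : ι}
    (hmin : ∀ x ∈ S, len hT r u ≤ len hT r x)
    {a b : S} (w : (T.induce S).Walk a b)
    (hbase : u ∈ (pw hT r ↑a).support) : u ∈ (pw hT r ↑b).support := by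
  induction w with
  | nil => exact hbase
  | @cons a c b hadj w ih =>
    apply ih
    have hac : T.Adj ↑a ↑c := hadj
    rcases adj_dichotomy hT r hac with hca | hc
    · exact mem_pw_trans hT hbase hca
    · -- ↑c on path r → ↑a
      by_cases hu : u ∈ (pw hT r ↑c).support
      · exact hu
      · have hdrop : u ∈ (pw hT (↑c) ↑a).support := by
          have hspec := SimpleGraph.Walk.take_spec (pw hT r ↑a) hc
          have : u ∈ ((pw hT r ↑a).takeUntil ↑c hc).support ∨
              u ∈ ((pw hT r ↑a).dropUntil ↑c hc).support := by
            have := hbase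
            rw [← hspec, SimpleGraph.Walk.support_append] at this
            rcases List.mem_append.mp this with h | h
            · exact Or.inl h
            · exact Or.inr (List.mem_of_mem_tail h)
          rcases this with h | h
          · rw [takeUntil_pw hT hc] at h; exact absurd h hu
          · rw [dropUntil_pw hT hc] at h; exact h
        have hsplit := len_split hT hdrop
        have hlen1 : len hT (↑c) ↑a = 1 := len_adj hT hac.symm
        rw [hlen1] at hsplit
        have hcases : len hT (↑c) u = 0 ∨ len hT u ↑a = 0 := by omega
        rcases hcases with h0 | h0
        · -- len c u = 0, u = c
          have : (↑c : ι) = u := SimpleGraph.Walk.eq_of_length_eq_zero h0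
          rw [← this]
          exact SimpleGraph.Walk.end_mem_support _
        · -- len u a = 0, u = a
          exfalso
          have hua : u = ↑a := SimpleGraph.Walk.eq_of_length_eq_zero h0
          -- then c on path r→u with len r c < len r u, contradiction with min
          have hcu : (↑c : ι) ∈ (pw hT r u).support := by rw [hua]; exact hc
          have := len_split hT hcu
          have hc1 : len hT (↑c) u = 1 := by rw [hua]; exact len_adj hT hac.symm
          have := hmin ↑c c.2
          omega

/-- An element of minimal `len r ·` in a connected set lies on the root path of
every element of the set. -/
lemma argmin_mem_pw (hT : T.IsTree) (r : ι) {S : Set ι}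
    (hconn : (T.induce S).Connected) {u s : ι} (hu : u ∈ S) (hs : s ∈ S)
    (hmin : ∀ x ∈ S, len hT r u ≤ len hT r x) : u ∈ (pw hT r s).support := by
  obtain ⟨w⟩ := hconn.preconnected ⟨u, hu⟩ ⟨s, hs⟩
  exact reach_invariant hT r hmin w (SimpleGraph.Walk.end_mem_support _)




section UpTree

variable {n : ℕ} (up : Fin (n+1) → Fin (n+1))

/-- The graph on `Fin (n+1)` determined by a parent ("up") function. -/
def upGraph : SimpleGraph (Fin (n+1)) where
  Adj i j := i ≠ j ∧ (up i = j ∨ up j = i)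
  symm := ⟨by intro i j ⟨h1, h2⟩; exact ⟨h1.symm, h2.symm⟩⟩

lemma upGraph_adj {i j : Fin (n+1)} :
    (upGraph up).Adj i j ↔ i ≠ j ∧ (up i = j ∨ up j = i) := Iff.rfl

variable (hup : ∀ i, i ≠ Fin.last n → i < up i) (hlast : up (Fin.last n) = Fin.last n)

include hup hlast

lemma upGraph_eq_up {i j : Fin (n+1)} (h : (upGraph up).Adj i j) (hij : i < j) :
    up i = j := by
  rcases h.2 with h2 | h2
  · exact h2
  · exfalso
    by_cases hl : j = Fin.last n
    · subst hl
      rw [hlast] at h2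
      exact absurd hij (by omega)
    · have := hup j hl
      rw [h2] at this
      exact absurd hij (by omega)

lemma upGraph_edge_char {e : Sym2 (Fin (n+1))} (he : e ∈ (upGraph up).edgeSet) :
    ∃ i, i ≠ Fin.last n ∧ e = s(i, up i) ∧ Sym2.inf e = i := by
  induction e with
  | _ i j =>
    have hadj : (upGraph up).Adj i j := he
    have hne : i ≠ j := hadj.1
    rcases lt_or_gt_of_ne hne with hij | hij
    · refine ⟨i, ?_, ?_, ?_⟩
      · intro hl; subst hl; exact (Fin.le_last j : j ≤ Fin.last n).not_gt hij
      · rw [upGraph_eq_up up hup hlast hadj hij]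
      · rw [Sym2.inf_mk]; exact min_eq_left hij.le
    · have hadj' := hadj.symm
      refine ⟨j, ?_, ?_, ?_⟩
      · intro hl; subst hl; exact (Fin.le_last i : i ≤ Fin.last n).not_gt hij
      · rw [upGraph_eq_up up hup hlast hadj' hij, Sym2.eq_swap]
      · rw [Sym2.inf_mk]; exact min_eq_right hij.le

lemma upGraph_connected : (upGraph up).Connected := by
  have key : ∀ k (i : Fin (n+1)), n - (i : ℕ) ≤ k → (upGraph up).Reachable i (Fin.last n) := by
    intro k
    induction k with
    | zero =>
      intro i hi
      have : (i : ℕ) = n := by have := i.isLt; omega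
      have hieq : i = Fin.last n := by ext; rw [Fin.val_last]; omega
      rw [hieq]
    | succ k ih =>
      intro i hi
      by_cases hl : i = Fin.last n
      · rw [hl]
      · have hlt := hup i hl
        have hadj : (upGraph up).Adj i (up i) := ⟨by omega, Or.inl rfl⟩
        have : n - ((up i : ℕ)) ≤ k := by
          have := (up i).isLt
          have hin : (i:ℕ) < n := by
            rcases Nat.lt_or_ge (i:ℕ) n with h | h
            · exact h
            · exfalso; apply hl; ext; rw [Fin.val_last]; omega
          omega
        exact hadj.reachable.trans (ih (up i) this)
  constructor
  · intro i j
    exact ((key n i (by omega)).trans (key n j (by omega)).symm)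

lemma upGraph_isAcyclic : (upGraph up).IsAcyclic := by
  intro a p hp
  -- finset of edges and of support tail
  classical
  have hEcard : p.edges.toFinset.card = p.length :=
    (List.toFinset_card_of_nodup hp.edges_nodup).trans p.length_edges
  have hScard : p.support.tail.toFinset.card = p.length := by
    rw [List.toFinset_card_of_nodup hp.support_nodup]
    have := p.length_support
    simp [List.length_tail, this]
  -- a ∈ p.support.tail, hence support and tail have the same elements
  have hne_nil : ¬ p.Nil := hp.not_nil
  have hmem_tail : ∀ x ∈ p.support, x ∈ p.support.tail := by
    cases p with
    | nil => simp at hne_nil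
    | cons h q =>
      intro x hx
      rw [SimpleGraph.Walk.support_cons] at hx ⊢
      simp only [List.tail_cons]
      rcases List.mem_cons.mp hx with rfl | hx
      · exact SimpleGraph.Walk.end_mem_support q
      · exact hx
  -- image of edges under Sym2.inf
  have himg : p.edges.toFinset.image Sym2.inf ⊆ p.support.tail.toFinset := by
    intro x hx
    rw [Finset.mem_image] at hx
    obtain ⟨e, he, rfl⟩ := hx
    rw [List.mem_toFinset] at he
    obtain ⟨i, hil, hei, hinf⟩ := upGraph_edge_char up hup hlast (p.edges_subset_edgeSet he)
    rw [hinf]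
    rw [List.mem_toFinset]
    apply hmem_tail
    subst hei
    exact p.fst_mem_support_of_mem_edges he
  have hinj : Set.InjOn Sym2.inf (p.edges.toFinset : Set (Sym2 (Fin (n+1)))) := by
    intro e1 h1 e2 h2 heq
    rw [Finset.mem_coe, List.mem_toFinset] at h1 h2
    obtain ⟨i1, hl1, he1, hi1⟩ := upGraph_edge_char up hup hlast (p.edges_subset_edgeSet h1)
    obtain ⟨i2, hl2, he2, hi2⟩ := upGraph_edge_char up hup hlast (p.edges_subset_edgeSet h2)
    rw [hi1, hi2] at heq
    subst heq
    rw [he1, he2]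
  have hcardimg : (p.edges.toFinset.image Sym2.inf).card = p.length := by
    rw [Finset.card_image_of_injOn hinj, hEcard]
  have heq : p.edges.toFinset.image Sym2.inf = p.support.tail.toFinset :=
    Finset.eq_of_subset_of_card_le himg (by rw [hcardimg, hScard])
  -- take the maximum of the support tail
  have h3 := hp.three_le_length
  have hnonempty : p.support.tail.toFinset.Nonempty := by
    rw [← Finset.card_pos, hScard]
    omega
  set M := p.support.tail.toFinset.max' hnonempty with hM
  have hMmem : M ∈ p.support.tail.toFinset := Finset.max'_mem _ _
  rw [← heq, Finset.mem_image] at hMmem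
  obtain ⟨e, he, hinfM⟩ := hMmem
  rw [List.mem_toFinset] at he
  obtain ⟨i, hil, hei, hinf⟩ := upGraph_edge_char up hup hlast (p.edges_subset_edgeSet he)
  rw [hinf] at hinfM
  subst hinfM
  -- up M is in the support tail and exceeds M
  have hupM : up M ∈ p.support.tail.toFinset := by
    rw [List.mem_toFinset]
    apply hmem_tail
    subst hei
    exact p.snd_mem_support_of_mem_edges he
  have := Finset.le_max' _ _ hupM
  have := hup M hil
  rw [← hM] at *
  omega

lemma upGraph_isTree : (upGraph up).IsTree :=
  ⟨upGraph_connected up hup hlast, upGraph_isAcyclic up hup hlast⟩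

end UpTree


lemma get_mem_take_iff {α : Type} {l : List α} (hnd : l.Nodup) (k : Fin l.length) (t : ℕ) :
    l.get k ∈ l.take t ↔ (k:ℕ) < t := by
  constructor
  · intro h
    obtain ⟨k', hk', heq⟩ := List.mem_iff_getElem.mp h
    rw [List.getElem_take] at heq
    have hlen := hk'
    rw [List.length_take] at hlen
    have hk'l : k' < l.length := lt_of_lt_of_le hlen (by simp [Nat.min_le_right])
    have : (⟨k', hk'l⟩ : Fin l.length) = k := by
      apply List.nodup_iff_injective_get.mp hnd
      simp [List.get_eq_getElem, heq]
    have := congrArg Fin.val this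
    simp at this
    omega
  · intro h
    apply List.mem_iff_getElem.mpr
    refine ⟨(k:ℕ), ?_, ?_⟩
    · rw [List.length_take]; exact lt_min h k.isLt
    · rw [List.getElem_take]; rfl

theorem exists_treeDecomp_of_order {V : Type} [Fintype V] [DecidableEq V]
    (G : SimpleGraph V) [DecidableRel G.Adj] (l : List (Sym2 V)) (hl : IsEdgeOrder G l)
    (hne : l ≠ []) :
    ∃ D : TreeDecomp G.lineGraph, D.width ≤ listComplexity G l := by
  classical
  obtain ⟨n, hn⟩ : ∃ n, l.length = n + 1 := by
    cases h : l.length with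
    | zero => exact absurd (List.length_eq_zero_iff.mp h) hne
    | succ k => exact ⟨k, rfl⟩
  have hnd := hl.1
  set E : Fin (n+1) → Sym2 V := fun i => l.get (Fin.cast hn.symm i) with hE
  have hmemE : ∀ i, E i ∈ G.edgeSet := fun i => (hl.2 _).mp (List.get_mem _ _)
  have hEinj : Function.Injective E := by
    intro i j hij
    have h2 := List.nodup_iff_injective_get.mp hnd hij
    have := congrArg Fin.val h2
    exact Fin.ext this
  have hEtake : ∀ (i : Fin (n+1)) (t : ℕ), E i ∈ l.take t ↔ (i:ℕ) < t := by
    intro i t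
    exact get_mem_take_iff hnd (Fin.cast hn.symm i) t
  set R : Fin (n+1) → V → V → Prop :=
    fun i => (fromEdgeSet {g : Sym2 V | g ∈ l.take ((i:ℕ)+1)}).Reachable with hR
  have hRmono : ∀ {i j : Fin (n+1)}, i ≤ j → ∀ {x y}, R i x y → R j x y := by
    intro i j hij x y hxy
    refine hxy.mono (fromEdgeSet_mono ?_)
    intro g hg
    simp only [Set.mem_setOf_eq] at hg ⊢
    have : l.take ((i:ℕ)+1) = (l.take ((j:ℕ)+1)).take ((i:ℕ)+1) := by
      rw [List.take_take]
      congr 1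
      omega
    rw [this] at hg
    exact (List.take_prefix _ _).subset hg
  have hRsame : ∀ (i : Fin (n+1)) (g : Sym2 V), g ∈ G.edgeSet → g ∈ l.take ((i:ℕ)+1) →
      ∀ x ∈ g, ∀ y ∈ g, R i x y := by
    intro i g hg hgt x hx y hy
    by_cases hxy : x = y
    · subst hxy; exact Reachable.refl x
    · have hgs : g = s(x,y) := (Sym2.mem_and_mem_iff hxy).mp ⟨hx, hy⟩
      refine Adj.reachable ?_
      rw [fromEdgeSet_adj]
      exact ⟨by rw [← hgs]; exact hgt, hxy⟩
  set touch : Fin (n+1) → Sym2 V → Prop :=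
    fun i f => f ∈ G.edgeSet ∧ f ∉ l.take ((i:ℕ)+1) ∧ ∃ x ∈ f, ∃ y ∈ E i, R i x y with htouch
  set P : Fin (n+1) → Fin (n+1) → Prop :=
    fun i j => i < j ∧ ∃ x ∈ E i, ∃ y ∈ E j, R j x y with hP
  set up : Fin (n+1) → Fin (n+1) := fun i =>
    if h : (Finset.univ.filter (fun j => P i j)).Nonempty
    then (Finset.univ.filter (fun j => P i j)).min' h else Fin.last n with hup_def
  have hup_spec : ∀ i j, P i j → P i (up i) ∧ up i ≤ j := by
    intro i j hPij
    have hne' : (Finset.univ.filter (fun j => P i j)).Nonempty :=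
      ⟨j, Finset.mem_filter.mpr ⟨Finset.mem_univ _, hPij⟩⟩
    rw [hup_def]
    simp only [hne', dif_pos]
    constructor
    · have := Finset.min'_mem (Finset.univ.filter (fun j => P i j)) hne'
      exact (Finset.mem_filter.mp this).2
    · exact Finset.min'_le _ _ (Finset.mem_filter.mpr ⟨Finset.mem_univ _, hPij⟩)
  have hup_gt : ∀ i, i ≠ Fin.last n → i < up i := by
    intro i hi
    rw [hup_def]
    by_cases h : (Finset.univ.filter (fun j => P i j)).Nonempty
    · simp only [h, dif_pos]
      have := Finset.min'_mem (Finset.univ.filter (fun j => P i j)) h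
      exact (Finset.mem_filter.mp this).2.1
    · simp only [h, dif_neg, not_false_iff]
      rcases lt_or_eq_of_le (Fin.le_last i) with h' | h'
      · exact h'
      · exact absurd h' hi
  have hup_last : up (Fin.last n) = Fin.last n := by
    rw [hup_def]
    have : ¬ (Finset.univ.filter (fun j => P (Fin.last n) j)).Nonempty := by
      rintro ⟨j, hj⟩
      have := (Finset.mem_filter.mp hj).2.1
      exact absurd this (Fin.le_last j : j ≤ Fin.last n).not_gt
    simp only [this, dif_neg, not_false_iff]
  set bagF : Fin (n+1) → Finset ↥G.edgeSet :=
    fun i => Finset.univ.filter (fun f => (f : Sym2 V) = E i ∨ touch i ↑f) with hbagF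
  have hmem_bag : ∀ (i : Fin (n+1)) (f : ↥G.edgeSet),
      f ∈ bagF i ↔ ((f : Sym2 V) = E i ∨ touch i ↑f) := by
    intro i f
    rw [hbagF]
    simp [Finset.mem_filter]
  -- index of an edge
  have hidx : ∀ f : ↥G.edgeSet, ∃ k : Fin (n+1), E k = (f : Sym2 V) := by
    intro f
    have : (f : Sym2 V) ∈ l := (hl.2 _).mpr f.2
    obtain ⟨kk, hkk⟩ := List.mem_iff_get.mp this
    exact ⟨Fin.cast hn kk, by rw [hE]; simpa using hkk⟩
  -- membership of f's own index
  have hSk : ∀ (f : ↥G.edgeSet) (k : Fin (n+1)), E k = (f : Sym2 V) → f ∈ bagF k := by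
    intro f k hk
    exact (hmem_bag k f).mpr (Or.inl hk.symm)
  -- the key climbing step
  have hS_lt : ∀ (f : ↥G.edgeSet) (k : Fin (n+1)), E k = (f : Sym2 V) →
      ∀ i, f ∈ bagF i → i ≠ k → (i < k ∧ up i ≤ k ∧ f ∈ bagF (up i)) := by
    intro f k hk i hfi hik
    rcases (hmem_bag i f).mp hfi with hcase | hcase
    · exact absurd (hEinj (hk.trans hcase)).symm hik
    · obtain ⟨hfe, hfnt, x, hxf, y, hyEi, hRixy⟩ := hcase
      have hilt : i < k := by
        rw [Fin.lt_def]
        have : ¬ ((k:ℕ) < (i:ℕ)+1) := by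
          intro hc
          apply hfnt
          rw [← hk]
          exact (hEtake k _).mpr hc
        have hne2 : (i:ℕ) ≠ (k:ℕ) := fun hc => hik (Fin.ext hc)
        omega
      have hPik : P i k := by
        refine ⟨hilt, y, hyEi, x, by rw [hk]; exact hxf, ?_⟩
        exact (hRmono hilt.le hRixy).symm
      obtain ⟨hPup, hupk⟩ := hup_spec i k hPik
      refine ⟨hilt, hupk, ?_⟩
      by_cases hupek : up i = k
      · rw [hupek]; exact hSk f k hk
      · have hupltk : up i < k := lt_of_le_of_ne hupk hupek
        apply (hmem_bag (up i) f).mpr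
        right
        refine ⟨hfe, ?_, ?_⟩
        · intro hc
          rw [← hk] at hc
          have := (hEtake k _).mp hc
          rw [Fin.lt_def] at hupltk
          omega
        · obtain ⟨hiup, x1, hx1, y1, hy1, hR1⟩ := hPup
          refine ⟨x, hxf, y1, hy1, ?_⟩
          have step1 : R (up i) x y := hRmono hiup.le hRixy
          have step2 : R (up i) y x1 := by
            apply hRsame (up i) (E i) (hmemE i) _ y hyEi x1 hx1
            apply (hEtake i _).mpr
            rw [Fin.lt_def] at hiup
            omega
          exact (step1.trans step2).trans hR1
  -- connectivity of the bag support
  have hconn : ∀ f : ↥G.edgeSet,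
      ((upGraph up).induce {t | f ∈ bagF t}).Connected := by
    intro f
    obtain ⟨k, hk⟩ := hidx f
    have hfk : f ∈ bagF k := hSk f k hk
    have key : ∀ (b : ℕ) (i : Fin (n+1)) (hi : f ∈ bagF i), (k:ℕ) - (i:ℕ) ≤ b →
        ((upGraph up).induce {t | f ∈ bagF t}).Reachable ⟨i, hi⟩ ⟨k, hfk⟩ := by
      intro b
      induction b with
      | zero =>
        intro i hi hle
        by_cases hik : i = k
        · subst hik; rfl
        · obtain ⟨hlt, _, _⟩ := hS_lt f k hk i hi hik
          rw [Fin.lt_def] at hlt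
          omega
      | succ b ih =>
        intro i hi hle
        by_cases hik : i = k
        · subst hik; rfl
        · obtain ⟨hlt, hupk, hbup⟩ := hS_lt f k hk i hi hik
          have hinl : i ≠ Fin.last n := by
            intro hc
            subst hc
            exact (Fin.le_last k : k ≤ Fin.last n).not_gt hlt
          have higt := hup_gt i hinl
          have hadj : ((upGraph up).induce {t | f ∈ bagF t}).Adj ⟨i, hi⟩ ⟨up i, hbup⟩ := by
            show (upGraph up).Adj i (up i)
            exact ⟨higt.ne, Or.inl rfl⟩
          refine hadj.reachable.trans (ih (up i) hbup ?_)
          rw [Fin.lt_def] at higt hlt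
          have := Fin.le_def.mp hupk
          omega
    have : Nonempty ↥{t | f ∈ bagF t} := ⟨⟨k, hfk⟩⟩
    refine ⟨?_⟩
    rintro ⟨i, hi⟩ ⟨j, hj⟩
    exact (key n i hi (by omega)).trans (key n j hj (by omega)).symm
  -- assemble the tree decomposition
  refine ⟨⟨Fin (n+1), inferInstance, upGraph up, upGraph_isTree up hup_gt hup_last, bagF,
      ?_, ?_, hconn⟩, ?_⟩
  · -- bag_cover
    intro f
    obtain ⟨k, hk⟩ := hidx f
    exact ⟨k, hSk f k hk⟩
  · -- bag_edge
    intro u v hadj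
    obtain ⟨huv, x, hxu, hxv⟩ := SimpleGraph.lineGraph_adj_iff_exists.mp hadj
    obtain ⟨i, hi⟩ := hidx u
    obtain ⟨j, hj⟩ := hidx v
    have hij : i ≠ j := by
      intro hc
      apply huv
      apply Subtype.ext
      rw [← hi, ← hj, hc]
    have hgen : ∀ (a b : ↥G.edgeSet) (ia ib : Fin (n+1)), E ia = (a : Sym2 V) →
        E ib = (b : Sym2 V) → ia < ib → (∃ z, z ∈ (a : Sym2 V) ∧ z ∈ (b : Sym2 V)) →
        a ∈ bagF ia ∧ b ∈ bagF ia := by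
      intro a b ia ib hia hib hlt ⟨z, hza, hzb⟩
      refine ⟨hSk a ia hia, (hmem_bag ia b).mpr (Or.inr ⟨b.2, ?_, ?_⟩)⟩
      · intro hc
        rw [← hib] at hc
        have := (hEtake ib _).mp hc
        rw [Fin.lt_def] at hlt
        omega
      · exact ⟨z, hzb, z, by rw [hia]; exact hza, Reachable.refl z⟩
    rcases lt_or_gt_of_ne hij with hlt | hlt
    · obtain ⟨h1, h2⟩ := hgen u v i j hi hj hlt ⟨x, hxu, hxv⟩
      exact ⟨i, h1, h2⟩
    · obtain ⟨h1, h2⟩ := hgen v u j i hj hi hlt ⟨x, hxv, hxu⟩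
      exact ⟨j, h2, h1⟩
  · -- width bound
    show (Finset.univ.sup fun t => (bagF t).card) - 1 ≤ listComplexity G l
    have hsup : (Finset.univ.sup fun t => (bagF t).card) ≤ listComplexity G l + 1 := by
      apply Finset.sup_le
      intro i _
      have hsub : bagF i ⊆ insert ⟨E i, hmemE i⟩
          (Finset.univ.filter (fun f : ↥G.edgeSet => touch i ↑f)) := by
        intro f hf
        rcases (hmem_bag i f).mp hf with hcase | hcase
        · have : f = ⟨E i, hmemE i⟩ := Subtype.ext hcase
          rw [this]; exact Finset.mem_insert_self _ _
        · exact Finset.mem_insert_of_mem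
            (Finset.mem_filter.mpr ⟨Finset.mem_univ _, hcase⟩)
      have hcard1 : (bagF i).card ≤
          (Finset.univ.filter (fun f : ↥G.edgeSet => touch i ↑f)).card + 1 :=
        le_trans (Finset.card_le_card hsub) (Finset.card_insert_le _ _)
      have hcard2 : (Finset.univ.filter (fun f : ↥G.edgeSet => touch i ↑f)).card =
          mergedDeg G (l.take ((i:ℕ)+1)) (E i) := by
        rw [mergedDeg]
        have hseteq : {f : Sym2 V | f ∈ G.edgeSet ∧ f ∉ l.take ((i:ℕ)+1) ∧
            ∃ x ∈ f, ∃ y ∈ E i,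
              (SimpleGraph.fromEdgeSet {g : Sym2 V | g ∈ l.take ((i:ℕ)+1)}).Reachable x y}
            = Subtype.val ''
              (↑(Finset.univ.filter (fun f : ↥G.edgeSet => touch i ↑f)) : Set ↥G.edgeSet) := by
          ext g
          simp only [Set.mem_setOf_eq, Set.mem_image, Finset.coe_filter,
            Finset.mem_univ, true_and]
          constructor
          · rintro ⟨hg1, hg2, hg3⟩
            exact ⟨⟨g, hg1⟩, ⟨hg1, hg2, hg3⟩, rfl⟩
          · rintro ⟨⟨g', hg'⟩, ht, rfl⟩
            exact ht
        rw [hseteq, Set.ncard_image_of_injective _ Subtype.val_injective,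
          Set.ncard_coe_finset]
      have hcard3 : mergedDeg G (l.take ((i:ℕ)+1)) (E i) ≤ listComplexity G l := by
        rw [listComplexity]
        exact Finset.le_sup (f := fun j : Fin l.length =>
          mergedDeg G (l.take ((j:ℕ) + 1)) (l.get j)) (Finset.mem_univ (Fin.cast hn.symm i))
      omega
    omega


end CCAux

namespace CCAux

open SimpleGraph

theorem exists_order_of_treeDecomp {V : Type} [Fintype V] [DecidableEq V]
    (G : SimpleGraph V) [DecidableRel G.Adj] (D : TreeDecomp G.lineGraph) :
    ∃ l : List (Sym2 V), IsEdgeOrder G l ∧ listComplexity G l ≤ D.width := by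
  classical
  letI := D.instFin
  have hT := D.isTree
  obtain ⟨r⟩ : Nonempty D.ι := hT.1.nonempty
  -- choose, for each edge, a bag node of minimal distance from the root
  have htop : ∀ f : ↥G.edgeSet, ∃ t : D.ι, f ∈ D.bag t ∧
      ∀ s, f ∈ D.bag s → len hT r t ≤ len hT r s := by
    intro f
    obtain ⟨t0, ht0⟩ := D.bag_cover f
    obtain ⟨t, htmem, hmin⟩ := Finset.exists_min_image
      (Finset.univ.filter (fun t => f ∈ D.bag t)) (len hT r)
      ⟨t0, Finset.mem_filter.mpr ⟨Finset.mem_univ _, ht0⟩⟩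
    exact ⟨t, (Finset.mem_filter.mp htmem).2,
      fun s hs => hmin s (Finset.mem_filter.mpr ⟨Finset.mem_univ _, hs⟩)⟩
  choose top htop_mem htop_min using htop
  set dep : Sym2 V → ℕ := fun g =>
    if hg : g ∈ G.edgeSet then len hT r (top ⟨g, hg⟩) else 0 with hdep
  have hdep_eq : ∀ (g : Sym2 V) (hg : g ∈ G.edgeSet), dep g = len hT r (top ⟨g, hg⟩) := by
    intro g hg
    rw [hdep]
    simp [hg]
  -- the sorted edge list
  set l : List (Sym2 V) :=
    (G.edgeFinset.toList).mergeSort (fun a b => decide (dep b ≤ dep a)) with hldef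
  have hperm : l.Perm G.edgeFinset.toList := List.mergeSort_perm _ _
  have hnd : l.Nodup := hperm.symm.nodup (Finset.nodup_toList _)
  have hmem : ∀ g : Sym2 V, g ∈ l ↔ g ∈ G.edgeSet := by
    intro g
    rw [hperm.mem_iff, Finset.mem_toList, mem_edgeFinset]
  have horder : IsEdgeOrder G l := ⟨hnd, hmem⟩
  have hsorted : l.Pairwise (fun a b => dep b ≤ dep a) := by
    have := List.pairwise_mergeSort (le := fun a b => decide (dep b ≤ dep a))
      (by intro a b c hab hbc; simp only [decide_eq_true_eq] at *; omega)
      (by intro a b; simp only [Bool.or_eq_true, decide_eq_true_eq]; omega)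
      G.edgeFinset.toList
    rw [← hldef] at this
    exact this.imp (by intro a b h; simpa using h)
  have hget_sorted : ∀ (a b : Fin l.length), a < b → dep (l.get b) ≤ dep (l.get a) :=
    fun a b hab => List.pairwise_iff_get.mp hsorted a b hab
  refine ⟨l, horder, ?_⟩
  rw [listComplexity]
  apply Finset.sup_le
  intro i _
  -- the step edge and its top bag
  have heel : l.get i ∈ l := List.get_mem _ _
  have hee : l.get i ∈ G.edgeSet := (hmem _).mp heel
  set esub : ↥G.edgeSet := ⟨l.get i, hee⟩ with hesub
  set t : D.ι := top esub with ht
  -- depth comparisons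
  have hdone_dep : ∀ g ∈ l.take ((i:ℕ)+1), dep (l.get i) ≤ dep g := by
    intro g hg
    obtain ⟨j, hj, hgj⟩ := List.mem_iff_getElem.mp hg
    rw [List.getElem_take] at hgj
    have hjlen : j < l.length := by
      rw [List.length_take] at hj
      omega
    rcases Nat.lt_or_ge j (i:ℕ) with hji | hji
    · have := hget_sorted ⟨j, hjlen⟩ i (by rw [Fin.lt_def]; exact hji)
      rw [← hgj]
      simpa using this
    · have hj' : j = (i:ℕ) := by
        rw [List.length_take] at hj
        omega
      subst hj'
      rw [← hgj]
      simp
  have hnotdone_dep : ∀ g ∈ l, g ∉ l.take ((i:ℕ)+1) → dep g ≤ dep (l.get i) := by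
    intro g hgl hgnt
    obtain ⟨j, hj⟩ := List.mem_iff_get.mp hgl
    have : ¬ ((j:ℕ) < (i:ℕ)+1) := by
      intro hc
      exact hgnt (by rw [← hj]; exact (get_mem_take_iff hnd j _).mpr hc)
    have hij : i < j := by rw [Fin.lt_def]; omega
    have := hget_sorted i j hij
    rw [hj] at this
    exact this
  -- the "good edge" predicate: edges having a minimal bag node whose root path passes t
  set Good : ↥G.edgeSet → Prop := fun f => ∃ u, f ∈ D.bag u ∧
    (∀ s, f ∈ D.bag s → len hT r u ≤ len hT r s) ∧ t ∈ (pw hT r u).support with hGood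
  have hbase : Good esub := ⟨t, htop_mem esub, htop_min esub, SimpleGraph.Walk.end_mem_support _⟩
  -- generic fact: any minimal node of a bag-support lies on root paths of all bag nodes
  have hargmin : ∀ (f : ↥G.edgeSet) (u : D.ι), f ∈ D.bag u →
      (∀ s, f ∈ D.bag s → len hT r u ≤ len hT r s) →
      ∀ s, f ∈ D.bag s → u ∈ (pw hT r s).support := by
    intro f u hu hmin s hs
    exact argmin_mem_pw hT r (D.bag_conn f) hu hs (fun x hx => hmin x hx)
  -- shared-bag propagation
  have hshared : ∀ (f g : ↥G.edgeSet), Good f → f ≠ g →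
      (∃ z, z ∈ (f : Sym2 V) ∧ z ∈ (g : Sym2 V)) →
      ∃ s', g ∈ D.bag s' ∧ t ∈ (pw hT r s').support := by
    intro f g hGf hfg hz
    obtain ⟨u, huf, humin, hut⟩ := hGf
    obtain ⟨z, hz1, hz2⟩ := hz
    have hadj : (G.lineGraph).Adj f g :=
      SimpleGraph.lineGraph_adj_iff_exists.mpr ⟨hfg, z, hz1, hz2⟩
    obtain ⟨s', hfs', hgs'⟩ := D.bag_edge f g hadj
    have hus' : u ∈ (pw hT r s').support := hargmin f u huf humin s' hfs'
    exact ⟨s', hgs', mem_pw_trans hT hut hus'⟩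
  have hstep : ∀ (f g : ↥G.edgeSet), Good f → dep (l.get i) ≤ dep (g : Sym2 V) →
      (∃ z, z ∈ (f : Sym2 V) ∧ z ∈ (g : Sym2 V)) → Good g := by
    intro f g hGf hdepg hz
    by_cases hfg : f = g
    · rw [← hfg]; exact hGf
    obtain ⟨s', hgs', hts'⟩ := hshared f g hGf hfg hz
    by_cases htug : t ∈ (pw hT r (top g)).support
    · exact ⟨top g, htop_mem g, htop_min g, htug⟩
    · -- t is between top g and s', hence in g's bag support, so g ∈ bag t
      have htmem : t ∈ (pw hT (top g) s').support := mem_pw_of_not_mem hT hts' htug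
      have hgt : g ∈ D.bag t := by
        have := pw_support_subset_of_connected hT (D.bag_conn g)
          (show top g ∈ {s | g ∈ D.bag s} from htop_mem g)
          (show s' ∈ {s | g ∈ D.bag s} from hgs') t htmem
        exact this
      refine ⟨t, hgt, ?_, SimpleGraph.Walk.end_mem_support _⟩
      intro s hs
      -- len r t = dep e ≤ dep g = len r (top g) ≤ len r s
      have h1 : len hT r t = dep (l.get i) := (hdep_eq _ hee).symm
      have h2 : dep (g : Sym2 V) = len hT r (top g) := by
        have := hdep_eq (g : Sym2 V) g.2
        simpa using this
      have h3 := htop_min g s hs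
      omega
  -- reachability induction along contracted edges
  have hreach : ∀ (x z : V)
      (w : (fromEdgeSet {g : Sym2 V | g ∈ l.take ((i:ℕ)+1)}).Walk x z),
      (∃ f : ↥G.edgeSet, Good f ∧ x ∈ (f : Sym2 V)) →
      ∃ f : ↥G.edgeSet, Good f ∧ z ∈ (f : Sym2 V) := by
    intro x z w
    induction w with
    | nil => exact fun h => h
    | @cons a b c hadj w ih =>
      intro ⟨f, hGf, haf⟩
      apply ih
      rw [fromEdgeSet_adj] at hadj
      obtain ⟨hab, hne⟩ := hadj
      have hab' : s(a, b) ∈ l.take ((i:ℕ)+1) := hab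
      have habl : s(a, b) ∈ l := List.mem_of_mem_take hab'
      have habe : s(a, b) ∈ G.edgeSet := (hmem _).mp habl
      set gsub : ↥G.edgeSet := ⟨s(a, b), habe⟩
      refine ⟨gsub, ?_, ?_⟩
      · apply hstep f gsub hGf
        · exact hdone_dep _ hab
        · exact ⟨a, haf, by simp [gsub]⟩
      · simp [gsub]
  -- final bound
  have hfinal : ∀ (g : Sym2 V) (hge : g ∈ G.edgeSet), g ∉ l.take ((i:ℕ)+1) →
      (∃ x ∈ g, ∃ y ∈ l.get i,
        (fromEdgeSet {h : Sym2 V | h ∈ l.take ((i:ℕ)+1)}).Reachable x y) →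
      (⟨g, hge⟩ : ↥G.edgeSet) ∈ D.bag t := by
    intro g hge hgnt ⟨x, hxg, y, hye, hxy⟩
    set gsub : ↥G.edgeSet := ⟨g, hge⟩ with hgsub
    obtain ⟨w⟩ := hxy.symm
    obtain ⟨f, hGf, hxf⟩ := hreach y x w ⟨esub, hbase, hye⟩
    by_cases hfg : f = gsub
    · -- g itself is Good; finish using depth comparison
      rw [hfg] at hGf
      obtain ⟨u, hu, humin, hut⟩ := hGf
      -- t on pw r u and len r u = min ≤ ... ; also dep g ≤ dep e
      have hsplit := len_split hT hut
      have hdg : dep g ≤ dep (l.get i) := hnotdone_dep g ((hmem g).mpr hge) hgnt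
      have h1 : len hT r t = dep (l.get i) := (hdep_eq _ hee).symm
      have h2 : len hT r u ≤ len hT r (top gsub) := humin _ (htop_mem gsub)
      have h3 : len hT r (top gsub) = dep g := (hdep_eq g hge).symm
      have h4 : len hT t u = 0 := by omega
      have : t = u := SimpleGraph.Walk.eq_of_length_eq_zero h4
      rw [this]
      exact hu
    · obtain ⟨s', hgs', hts'⟩ := hshared f gsub hGf hfg ⟨x, hxf, hxg⟩
      by_cases htug : t ∈ (pw hT r (top gsub)).support
      · -- len r (top g) ≥ len r t, but dep g ≤ dep e gives equality, so top g = t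
        have hsplit := len_split hT htug
        have hdg : dep g ≤ dep (l.get i) := hnotdone_dep g ((hmem g).mpr hge) hgnt
        have h1 : len hT r t = dep (l.get i) := (hdep_eq _ hee).symm
        have h3 : len hT r (top gsub) = dep g := (hdep_eq g hge).symm
        have h4 : len hT t (top gsub) = 0 := by omega
        have : t = top gsub := SimpleGraph.Walk.eq_of_length_eq_zero h4
        rw [this]
        exact htop_mem gsub
      · have htmem : t ∈ (pw hT (top gsub) s').support := mem_pw_of_not_mem hT hts' htug
        exact pw_support_subset_of_connected hT (D.bag_conn gsub)
          (show top gsub ∈ {s | gsub ∈ D.bag s} from htop_mem gsub)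
          (show s' ∈ {s | gsub ∈ D.bag s} from hgs') t htmem
  -- cardinality bookkeeping
  have hsubset : {f : Sym2 V | f ∈ G.edgeSet ∧ f ∉ l.take ((i:ℕ)+1) ∧
      ∃ x ∈ f, ∃ y ∈ l.get i,
        (fromEdgeSet {h : Sym2 V | h ∈ l.take ((i:ℕ)+1)}).Reachable x y}
      ⊆ Subtype.val '' (↑((D.bag t).erase esub) : Set ↥G.edgeSet) := by
    rintro g ⟨hge, hgnt, hre⟩
    refine ⟨⟨g, hge⟩, ?_, rfl⟩
    rw [Finset.coe_erase]
    refine ⟨hfinal g hge hgnt hre, ?_⟩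
    intro hc
    apply hgnt
    have : g = l.get i := by
      have := congrArg Subtype.val hc
      simpa [esub] using this
    rw [this]
    exact (get_mem_take_iff hnd i _).mpr (by omega)
  have hcard : mergedDeg G (l.take ((i:ℕ)+1)) (l.get i) ≤ ((D.bag t).erase esub).card := by
    rw [mergedDeg]
    calc Set.ncard _ ≤ (Subtype.val '' (↑((D.bag t).erase esub) : Set ↥G.edgeSet)).ncard := by
          exact Set.ncard_le_ncard hsubset (Set.toFinite _)
      _ = ((D.bag t).erase esub).card := by
          rw [Set.ncard_image_of_injective _ Subtype.val_injective, Set.ncard_coe_finset]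
  have hbagt : esub ∈ D.bag t := htop_mem esub
  have herase : ((D.bag t).erase esub).card = (D.bag t).card - 1 :=
    Finset.card_erase_of_mem hbagt
  have hbag_le : (D.bag t).card ≤ (@Finset.univ D.ι D.instFin).sup (fun s => (D.bag s).card) :=
    Finset.le_sup (f := fun s => (D.bag s).card) (Finset.mem_univ t)
  rw [TreeDecomp.width]
  omega


end CCAux

/-- For every finite simple graph `G` with at least one edge,
`cc(G) = tw(L(G))`, where `L(G)` is the line graph of `G`. -/
theorem cc_eq_treewidth_lineGraph
    {V : Type} [Fintype V] [DecidableEq V] (G : SimpleGraph V) [DecidableRel G.Adj]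
    (hE : G.edgeFinset.Nonempty) :
    cc G = treewidth G.lineGraph := by
  classical
  have hl0 : IsEdgeOrder G G.edgeFinset.toList :=
    ⟨Finset.nodup_toList _, fun e => by rw [Finset.mem_toList, SimpleGraph.mem_edgeFinset]⟩
  have hAne : {n : ℕ | ∃ l, IsEdgeOrder G l ∧ listComplexity G l = n}.Nonempty :=
    ⟨_, G.edgeFinset.toList, hl0, rfl⟩
  apply le_antisymm
  · -- cc ≤ treewidth
    have hl0ne : G.edgeFinset.toList ≠ [] := by
      intro hc
      rw [Finset.toList_eq_nil] at hc
      rw [hc] at hE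
      simp at hE
    obtain ⟨D0, _⟩ := CCAux.exists_treeDecomp_of_order G _ hl0 hl0ne
    have hBne : {n : ℕ | ∃ D : TreeDecomp G.lineGraph, D.width = n}.Nonempty := ⟨_, D0, rfl⟩
    obtain ⟨D, hD⟩ := Nat.sInf_mem hBne
    obtain ⟨l, hord, hcomp⟩ := CCAux.exists_order_of_treeDecomp G D
    calc cc G ≤ listComplexity G l := Nat.sInf_le ⟨l, hord, rfl⟩
      _ ≤ D.width := hcomp
      _ = treewidth G.lineGraph := hD
  · -- treewidth ≤ cc
    obtain ⟨l, hord, hcomp⟩ := Nat.sInf_mem hAne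
    have hlne : l ≠ [] := by
      obtain ⟨e0, he0⟩ := hE
      intro hc
      subst hc
      have := (hord.2 e0).mpr (SimpleGraph.mem_edgeFinset.mp he0)
      simp at this
    obtain ⟨D, hD⟩ := CCAux.exists_treeDecomp_of_order G l hord hlne
    calc treewidth G.lineGraph ≤ D.width := Nat.sInf_le ⟨D, rfl⟩
      _ ≤ listComplexity G l := hD
      _ = cc G := hcomp
end

section
/- For every finite simple graph G with at least one edge, tw(L(G)) ≤ Δ(G)·(tw(G) + 1) − 1, where L(G) is the line graph of G and Δ(G) is the maximum degree of a vertex of G. -/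
lemma conn_of_subsingleton {W : Type*} [Subsingleton W] [Nonempty W] (H : SimpleGraph W) :
    H.Connected :=
  ⟨fun a b => by rw [Subsingleton.elim a b]⟩

def trivialDecomp {V : Type} [Fintype V] (G : SimpleGraph V) : TreeDecomp G where
  ι := Unit
  instFin := inferInstance
  T := ⊥
  isTree := ⟨conn_of_subsingleton _, SimpleGraph.isAcyclic_bot⟩
  bag := fun _ => Finset.univ
  bag_cover := fun v => ⟨(), by simp⟩
  bag_edge := fun u v _ => ⟨(), by simp⟩
  bag_conn := fun v => by
    have : Nonempty {t : Unit | v ∈ (Finset.univ : Finset V)} := ⟨⟨(), by simp⟩⟩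
    exact conn_of_subsingleton _

lemma treewidth_mem {V : Type} [Fintype V] (G : SimpleGraph V) :
    ∃ D : TreeDecomp G, D.width = treewidth G := by
  have h : {n : ℕ | ∃ D : TreeDecomp G, D.width = n}.Nonempty :=
    ⟨(trivialDecomp G).width, trivialDecomp G, rfl⟩
  exact Nat.sInf_mem h

/-- For every finite simple graph `G` with at least one edge,
`tw(L(G)) ≤ Δ(G)·(tw(G) + 1) - 1`. -/
theorem treewidth_lineGraph_le
    {V : Type} [Fintype V] [DecidableEq V] (G : SimpleGraph V) [DecidableRel G.Adj]
    (hE : G.edgeFinset.Nonempty) :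
    treewidth G.lineGraph ≤ G.maxDegree * (treewidth G + 1) - 1 := by
  classical
  obtain ⟨D, hD⟩ := treewidth_mem G
  letI := D.instFin
  -- the sup of bag sizes equals treewidth G + 1
  have hsup1 : 1 ≤ (Finset.univ : Finset D.ι).sup (fun t => (D.bag t).card) := by
    obtain ⟨e, he⟩ := hE
    rw [SimpleGraph.mem_edgeFinset] at he
    obtain ⟨⟨u, v⟩, huv⟩ := e.exists_rep
    rw [← huv] at he
    have hadj : G.Adj u v := G.mem_edgeSet.mp he
    obtain ⟨t, hu, _⟩ := D.bag_edge u v hadj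
    exact le_trans (Finset.card_pos.mpr ⟨u, hu⟩)
      (Finset.le_sup (f := fun t => (D.bag t).card) (Finset.mem_univ t))
  have hbag : ∀ t : D.ι, (D.bag t).card ≤ treewidth G + 1 := by
    intro t
    have h1 : (D.bag t).card ≤ (Finset.univ : Finset D.ι).sup (fun t => (D.bag t).card) :=
      Finset.le_sup (f := fun t => (D.bag t).card) (Finset.mem_univ t)
    have h2 : D.width = (Finset.univ : Finset D.ι).sup (fun t => (D.bag t).card) - 1 := rfl
    rw [hD] at h2
    omega
  set B' : D.ι → Finset G.edgeSet := fun t =>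
    Finset.univ.filter (fun e : G.edgeSet => ∃ v ∈ D.bag t, v ∈ (e : Sym2 V)) with hB'
  have hmemB' : ∀ (t : D.ι) (e : G.edgeSet), e ∈ B' t ↔ ∃ v ∈ D.bag t, v ∈ (e : Sym2 V) := by
    intro t e; simp [hB']
  have hcard : ∀ t : D.ι, (B' t).card ≤ G.maxDegree * (treewidth G + 1) := by
    intro t
    have h1 : (B' t).image Subtype.val ⊆ (D.bag t).biUnion (fun v => G.incidenceFinset v) := by
      intro e he
      simp only [Finset.mem_image] at he
      obtain ⟨e', he', rfl⟩ := he
      obtain ⟨v, hv, hve⟩ := (hmemB' t e').mp he'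
      refine Finset.mem_biUnion.mpr ⟨v, hv, ?_⟩
      rw [SimpleGraph.mem_incidenceFinset]
      exact ⟨e'.2, hve⟩
    calc (B' t).card = ((B' t).image Subtype.val).card :=
          (Finset.card_image_of_injective _ Subtype.val_injective).symm
      _ ≤ ((D.bag t).biUnion (fun v => G.incidenceFinset v)).card := Finset.card_le_card h1
      _ ≤ ∑ v ∈ D.bag t, (G.incidenceFinset v).card := Finset.card_biUnion_le
      _ ≤ ∑ _v ∈ D.bag t, G.maxDegree := by
          refine Finset.sum_le_sum fun v _ => ?_
          rw [G.card_incidenceFinset_eq_degree]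
          exact G.degree_le_maxDegree v
      _ = (D.bag t).card * G.maxDegree := by simp [mul_comm]
      _ ≤ (treewidth G + 1) * G.maxDegree := Nat.mul_le_mul_right _ (hbag t)
      _ = G.maxDegree * (treewidth G + 1) := mul_comm _ _
  let D' : TreeDecomp G.lineGraph :=
    { ι := D.ι
      instFin := D.instFin
      T := D.T
      isTree := D.isTree
      bag := B'
      bag_cover := fun e => by
        obtain ⟨⟨u, v⟩, huv⟩ := e.1.exists_rep
        have he2 : (e : Sym2 V) ∈ G.edgeSet := e.2
        rw [← huv] at he2
        have hadj : G.Adj u v := G.mem_edgeSet.mp he2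
        obtain ⟨t, hu, _⟩ := D.bag_edge u v hadj
        refine ⟨t, (hmemB' t e).mpr ⟨u, hu, ?_⟩⟩
        rw [← huv]; exact Sym2.mem_mk_left u v
      bag_edge := fun e f hef => by
        rw [SimpleGraph.lineGraph_adj_iff_exists] at hef
        obtain ⟨-, v, hv1, hv2⟩ := hef
        obtain ⟨t, ht⟩ := D.bag_cover v
        exact ⟨t, (hmemB' t e).mpr ⟨v, ht, hv1⟩, (hmemB' t f).mpr ⟨v, ht, hv2⟩⟩
      bag_conn := fun e => by
        obtain ⟨⟨u, v⟩, huv⟩ := e.1.exists_rep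
        have he2 : (e : Sym2 V) ∈ G.edgeSet := e.2
        rw [← huv] at he2
        have hadj : G.Adj u v := G.mem_edgeSet.mp he2
        have hset : {t : D.ι | e ∈ B' t} = {t : D.ι | u ∈ D.bag t} ∪ {t : D.ι | v ∈ D.bag t} := by
          ext t
          simp only [Set.mem_setOf_eq, Set.mem_union, hmemB', ← huv, Sym2.mem_iff]
          constructor
          · rintro ⟨w, hw, rfl | rfl⟩
            · exact Or.inl hw
            · exact Or.inr hw
          · rintro (h | h)
            · exact ⟨u, h, Or.inl rfl⟩
            · exact ⟨v, h, Or.inr rfl⟩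
        rw [hset]
        obtain ⟨t0, ht0u, ht0v⟩ := D.bag_edge u v hadj
        exact SimpleGraph.induce_union_connected (D.bag_conn u).preconnected (D.bag_conn v).preconnected ⟨t0, ht0u, ht0v⟩ }
  have hW : D'.width ≤ G.maxDegree * (treewidth G + 1) - 1 := by
    have : (@Finset.univ D'.ι D'.instFin).sup (fun t => (D'.bag t).card)
        ≤ G.maxDegree * (treewidth G + 1) := Finset.sup_le fun t _ => hcard t
    exact Nat.sub_le_sub_right this 1
  exact le_trans (Nat.sInf_le ⟨D', rfl⟩) hW
end

section
/- Let d ≥ 1 be an integer, let ε > 0 be a real number, and let G be a finite simple d-regular graph with |V(G)| ≥ 2 that is an ε-edge-expander. Then tw(G) ≥ ε·|V(G)|/(4d) − 1. -/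
/-- The number of edges of `G` with exactly one endpoint in `S`. -/
noncomputable def edgeBoundary {V : Type} (G : SimpleGraph V) (S : Finset V) : ℕ :=
  Set.ncard {e : Sym2 V | e ∈ G.edgeSet ∧ (∃ x ∈ e, x ∈ S) ∧ (∃ y ∈ e, y ∉ S)}

/-- `G` is an `ε`-edge-expander: every set `S` of at most half the vertices has
edge boundary of size at least `ε·|S|`. -/
def IsEdgeExpander {V : Type} [Fintype V] (G : SimpleGraph V) (ε : ℝ) : Prop :=
  ∀ S : Finset V, (S.card : ℝ) ≤ (Fintype.card V : ℝ) / 2 →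
    ε * (S.card : ℝ) ≤ (edgeBoundary G S : ℝ)



open SimpleGraph
set_option linter.unusedSectionVars false

namespace TwAux

variable {ι : Type} [DecidableEq ι] {T : SimpleGraph ι}

/-- abbreviation for the unique-path property of a tree -/
def UP (T : SimpleGraph ι) : Prop := ∀ v w : ι, ∃! p : T.Walk v w, p.IsPath

noncomputable def thePath (hT : UP T) (t x : ι) : T.Walk t x := (hT t x).choose

lemma thePath_isPath (hT : UP T) (t x : ι) : (thePath hT t x).IsPath := (hT t x).choose_spec.1

lemma path_eq (hT : UP T) {t x : ι} (p q : T.Walk t x) (hp : p.IsPath) (hq : q.IsPath) :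
    p = q := ((hT t x).unique hp hq)

noncomputable def pen (hT : UP T) (t x : ι) : ι := (thePath hT t x).getVert 1

lemma pen_eq (hT : UP T) {t x : ι} (q : T.Walk t x) (hq : q.IsPath) :
    pen hT t x = q.getVert 1 := by
  rw [pen, path_eq hT (thePath hT t x) q (thePath_isPath hT t x) hq]

lemma length_pos_of_ne (hT : UP T) {t x : ι} (h : x ≠ t) : 0 < (thePath hT t x).length := by
  rcases Nat.eq_zero_or_pos (thePath hT t x).length with h0 | h0
  · exact absurd (SimpleGraph.Walk.eq_of_length_eq_zero h0).symm h
  · exact h0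

lemma pen_adj (hT : UP T) {t x : ι} (h : x ≠ t) : T.Adj t (pen hT t x) := by
  have := (thePath hT t x).adj_getVert_succ (length_pos_of_ne hT h)
  simpa [SimpleGraph.Walk.getVert_zero, pen] using this

lemma pen_ne (hT : UP T) {t x : ι} (h : x ≠ t) : pen hT t x ≠ t :=
  fun he => by exact absurd (he ▸ pen_adj hT h) (T.irrefl)

lemma pen_self_of_adj (hT : UP T) {t s : ι} (h : T.Adj t s) : pen hT t s = s := by
  have hp : (SimpleGraph.Walk.cons h SimpleGraph.Walk.nil : T.Walk t s).IsPath := by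
    simp [SimpleGraph.Walk.cons_isPath_iff, h.ne]
  rw [pen_eq hT _ hp]
  rfl

lemma getVert_one_append {a b c : ι} (q : T.Walk a b) (r : T.Walk b c) (h : q.length ≠ 0) :
    (q.append r).getVert 1 = q.getVert 1 := by
  rw [SimpleGraph.Walk.getVert_append]
  by_cases h1 : 1 < q.length
  · simp [h1]
  · have hq1 : q.length = 1 := by omega
    simp only [hq1, lt_irrefl, if_false]
    have : q.getVert q.length = b := SimpleGraph.Walk.getVert_length q
    rw [hq1] at this
    simp [this]

/-- If `s ∈ support(thePath t x)` and `Adj t s`, then `pen t x = s`. -/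
lemma pen_of_mem_support (hT : UP T) {t s x : ι} (hadj : T.Adj t s)
    (hmem : s ∈ (thePath hT t x).support) : pen hT t x = s := by
  set p := thePath hT t x with hp
  have hq : (p.takeUntil s hmem).IsPath := (thePath_isPath hT t x).takeUntil hmem
  have hedge : (SimpleGraph.Walk.cons hadj SimpleGraph.Walk.nil : T.Walk t s).IsPath := by
    simp [SimpleGraph.Walk.cons_isPath_iff, hadj.ne]
  have hqe : p.takeUntil s hmem = SimpleGraph.Walk.cons hadj SimpleGraph.Walk.nil :=
    path_eq hT _ _ hq hedge
  have hspec := p.take_spec hmem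
  have : pen hT t x = ((p.takeUntil s hmem).append (p.dropUntil s hmem)).getVert 1 := by
    rw [pen, ← hp, hspec]
  rw [this, getVert_one_append _ _ (by rw [hqe]; simp)]
  rw [hqe]; rfl

/-- adjacent vertices distinct from `t` have the same `pen`. -/
lemma pen_adj_eq (hT : UP T) {t x y : ι} (hx : x ≠ t) (hy : y ≠ t) (hadj : T.Adj x y) :
    pen hT t x = pen hT t y := by
  set p := thePath hT t x with hpdef
  by_cases hmem : y ∈ p.support
  · -- take the prefix up to y
    have hq : (p.takeUntil y hmem).IsPath := (thePath_isPath hT t x).takeUntil hmem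
    have h1 : pen hT t y = (p.takeUntil y hmem).getVert 1 := pen_eq hT _ hq
    have hlen : (p.takeUntil y hmem).length ≠ 0 := by
      intro h0
      exact hy (SimpleGraph.Walk.eq_of_length_eq_zero h0).symm
    have h2 : pen hT t x = ((p.takeUntil y hmem).append (p.dropUntil y hmem)).getVert 1 := by
      rw [pen, ← hpdef, p.take_spec hmem]
    rw [h2, getVert_one_append _ _ hlen, h1]
  · -- extend the path by the edge x~y
    have hcq : (p.concat hadj).IsPath := by
      rw [← SimpleGraph.Walk.isPath_reverse_iff, SimpleGraph.Walk.reverse_concat]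
      refine ((thePath_isPath hT t x).reverse).cons ?_
      rwa [SimpleGraph.Walk.support_reverse, List.mem_reverse]
    have h1 : pen hT t y = (p.concat hadj).getVert 1 := pen_eq hT _ hcq
    rw [h1, SimpleGraph.Walk.concat_eq_append,
      getVert_one_append _ _ (Nat.pos_iff_ne_zero.mp (length_pos_of_ne hT hx))]
    rfl


/-- Claim B: if `Adj t s`, `x ≠ s` and `pen t x ≠ s` (or `x = t`), then `pen s x = t`. -/
lemma pen_rev_eq (hT : UP T) {t s x : ι} (hadj : T.Adj t s) (hxs : x ≠ s)
    (hx : x = t ∨ pen hT t x ≠ s) : pen hT s x = t := by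
  rcases eq_or_ne x t with rfl | hxt
  · exact pen_self_of_adj hT hadj.symm
  · have hpen : pen hT t x ≠ s := by
      rcases hx with h | h
      · exact absurd h hxt
      · exact h
    have hs : s ∉ (thePath hT t x).support := fun hmem => hpen (pen_of_mem_support hT hadj hmem)
    have hq : (SimpleGraph.Walk.cons hadj.symm (thePath hT t x)).IsPath :=
      (thePath_isPath hT t x).cons hs
    rw [pen_eq hT _ hq]
    simp [SimpleGraph.Walk.getVert_cons_succ]

/-- Claim A: if `pen t x = s` with `x ≠ t`, `x ≠ s`, then `pen s x ≠ t`. -/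
lemma pen_rev_ne (hT : UP T) {t s x : ι} (hxt : x ≠ t) (hxs : x ≠ s)
    (hpen : pen hT t x = s) : pen hT s x ≠ t := by
  have hp := thePath_isPath hT t x
  set p := thePath hT t x with hpdef
  cases hq : p with
  | nil => exact absurd rfl hxt
  | cons h q =>
    rename_i w
    have hw : w = s := by
      have : pen hT t x = w := by
        rw [pen, ← hpdef, hq, SimpleGraph.Walk.getVert_cons_succ, SimpleGraph.Walk.getVert_zero]
      rw [← hpen, this]
    subst hw
    rw [hq, SimpleGraph.Walk.cons_isPath_iff] at hp
    have hqpath : q.IsPath := hp.1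
    have ht : t ∉ q.support := hp.2
    rw [pen_eq hT q hqpath]
    intro hcon
    apply ht
    rw [SimpleGraph.Walk.mem_support_iff_exists_getVert]
    refine ⟨1, hcon, ?_⟩
    have : 0 < q.length := by
      rcases Nat.eq_zero_or_pos q.length with h0 | h0
      · exact absurd (SimpleGraph.Walk.eq_of_length_eq_zero h0).symm hxs
      · exact h0
    omega

/-- `pen t ·` is constant on connected sets avoiding `t`. -/
lemma pen_const_of_reachable (hT : UP T) {t : ι} {W : Set ι} (htW : t ∉ W)
    (a b : W) (hr : (T.induce W).Reachable a b) : pen hT t a.1 = pen hT t b.1 := by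
  obtain ⟨w⟩ := hr
  induction w with
  | nil => rfl
  | cons h q ih =>
    rename_i u v _
    have hadj : T.Adj u.1 v.1 := h
    have h1 : pen hT t u.1 = pen hT t v.1 :=
      pen_adj_eq hT (fun he => htW (he ▸ u.2)) (fun he => htW (he ▸ v.2)) hadj
    rw [h1, ih]


section Centroid

variable {V : Type} [Fintype V] [DecidableEq V] [Fintype ι]

noncomputable def Cset (hT : UP T) (t s : ι) : Finset ι :=
  Finset.univ.filter (fun x => x ≠ t ∧ pen hT t x = s)

noncomputable def Wt (hT : UP T) (f : V → ι) (t s : ι) : ℕ :=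
  (Finset.univ.filter (fun v : V => f v ≠ t ∧ pen hT t (f v) = s)).card

lemma Wt_add_Wt_le (hT : UP T) (f : V → ι) {t s : ι} :
    Wt hT f t s + Wt hT f s t ≤ Fintype.card V := by
  rw [Wt, Wt, ← Finset.card_union_of_disjoint, ← Finset.card_univ]
  · exact Finset.card_le_card (Finset.subset_univ _)
  · rw [Finset.disjoint_filter]
    rintro v - ⟨hvt, hpv⟩ ⟨hvs, hpv'⟩
    exact pen_rev_ne hT hvt hvs hpv hpv'

lemma exists_centroid (hT : UP T) (f : V → ι) [Nonempty ι] :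
    ∃ t : ι, ∀ s : ι, 2 * Wt hT f t s ≤ Fintype.card V := by
  by_contra hcon
  push_neg at hcon
  set P : Finset (ι × ι) :=
    Finset.univ.filter (fun p => Fintype.card V < 2 * Wt hT f p.1 p.2) with hP
  have hPne : P.Nonempty := by
    obtain ⟨s0, hs0⟩ := hcon (Classical.arbitrary ι)
    exact ⟨(Classical.arbitrary ι, s0), by simp [hP, hs0]⟩
  obtain ⟨⟨t, s⟩, htsP, hmin⟩ := P.exists_min_image (fun p => (Cset hT p.1 p.2).card) hPne
  have hts : Fintype.card V < 2 * Wt hT f t s := by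
    simpa [hP] using htsP
  have hWpos : 0 < Wt hT f t s := by omega
  obtain ⟨v, hv⟩ := Finset.card_pos.mp hWpos
  rw [Finset.mem_filter] at hv
  have hadj : T.Adj t s := hv.2.2 ▸ pen_adj hT hv.2.1
  obtain ⟨s', hs'⟩ := hcon s
  have hs't : s' ≠ t := by
    intro he
    have hdisj := Wt_add_Wt_le hT f (t := t) (s := s)
    rw [he] at hs'
    omega
  -- Cset s s' ⊂ Cset t s
  have hsub : Cset hT s s' ⊆ Cset hT t s := by
    intro x hx
    rw [Cset, Finset.mem_filter] at hx ⊢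
    obtain ⟨-, hxs, hpx⟩ := hx
    refine ⟨Finset.mem_univ _, ?_⟩
    by_contra hncon
    rw [not_and_or] at hncon
    have : pen hT s x = t := by
      apply pen_rev_eq hT hadj hxs
      rcases hncon with h | h
      · left; exact not_not.mp h
      · right; exact h
    rw [hpx] at this
    exact hs't this
  have hsmem : s ∈ Cset hT t s := by
    rw [Cset, Finset.mem_filter]
    exact ⟨Finset.mem_univ _, hadj.ne', pen_self_of_adj hT hadj⟩
  have hsnmem : s ∉ Cset hT s s' := by
    rw [Cset, Finset.mem_filter]
    rintro ⟨-, h, -⟩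
    exact h rfl
  have hlt : (Cset hT s s').card < (Cset hT t s).card :=
    Finset.card_lt_card (Finset.ssubset_iff_of_subset hsub |>.mpr ⟨s, hsmem, hsnmem⟩)
  have : (s, s') ∈ P := by simp [hP, hs']
  have := hmin (s, s') this
  simp only at this
  omega

end Centroid

/-- Grouping lemma, small-pieces case. -/
lemma grouping_small {α : Type} [DecidableEq α] (h : α → ℝ) {c : ℝ} (hc : 0 < c) (hnn : ∀ a, 0 ≤ h a)
    (F : Finset α) (hsmall : ∀ a ∈ F, h a < c) (htot : c ≤ ∑ a ∈ F, h a) :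
    ∃ A ⊆ F, c ≤ ∑ a ∈ A, h a ∧ ∑ a ∈ A, h a ≤ 2 * c := by
  induction F using Finset.induction_on with
  | empty => simp at htot; linarith
  | insert _ _ hnm ih =>
    rename_i a F
    by_cases hrec : c ≤ ∑ x ∈ F, h x
    · obtain ⟨A, hAF, hA⟩ := ih (fun x hx => hsmall x (Finset.mem_insert_of_mem hx)) hrec
      exact ⟨A, hAF.trans (Finset.subset_insert _ _), hA⟩
    · refine ⟨insert a F, Finset.Subset.refl _, htot, ?_⟩
      rw [Finset.sum_insert hnm]
      push_neg at hrec
      have := hsmall a (Finset.mem_insert_self a F)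
      linarith

/-- Grouping lemma: pieces of size `≤ n/2` with total `≥ n/4` admit a
sub-collection with total in `[n/4, n/2]`. -/
lemma grouping {α : Type} [DecidableEq α] (h : α → ℝ) {n : ℝ} (hn : 0 < n) (hnn : ∀ a, 0 ≤ h a)
    (F : Finset α) (hsmall : ∀ a ∈ F, h a ≤ n / 2) (htot : n / 4 ≤ ∑ a ∈ F, h a) :
    ∃ A ⊆ F, n / 4 ≤ ∑ a ∈ A, h a ∧ ∑ a ∈ A, h a ≤ n / 2 := by
  by_cases hbig : ∃ a ∈ F, n / 4 ≤ h a
  · obtain ⟨a, haF, ha⟩ := hbig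
    refine ⟨{a}, Finset.singleton_subset_iff.mpr haF, ?_, ?_⟩
    · simpa using ha
    · simpa using hsmall a haF
  · push_neg at hbig
    obtain ⟨A, hAF, h1, h2⟩ := grouping_small h (by linarith) hnn F hbig htot
    exact ⟨A, hAF, h1, by linarith⟩



section Boundary

variable {V : Type} [Fintype V] [DecidableEq V] (G : SimpleGraph V) [DecidableRel G.Adj]

lemma edgeBoundary_le_sum_degree (S B : Finset V)
    (hcross : ∀ u v : V, G.Adj u v → u ∈ S → v ∉ S → u ∈ B ∨ v ∈ B) :
    edgeBoundary G S ≤ ∑ b ∈ B, G.degree b := by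
  classical
  set E := {e : Sym2 V | e ∈ G.edgeSet ∧ (∃ x ∈ e, x ∈ S) ∧ (∃ y ∈ e, y ∉ S)} with hEdef
  have hE : E.Finite := Set.toFinite _
  have h1 : edgeBoundary G S = hE.toFinset.card := by
    rw [edgeBoundary, Set.ncard_eq_toFinset_card _ hE]
  have hsub : hE.toFinset ⊆ B.biUnion (fun b => G.incidenceFinset b) := by
    intro e he
    rw [Set.Finite.mem_toFinset] at he
    induction e with
    | _ u v =>
      obtain ⟨hedge, ⟨x, hxe, hxS⟩, ⟨y, hye, hyS⟩⟩ := he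
      rw [Sym2.mem_iff] at hxe hye
      have hadj : G.Adj u v := hedge
      rcases hxe with rfl | rfl <;> rcases hye with rfl | rfl
      · exact absurd hxS hyS
      · rcases hcross x y hadj hxS hyS with hb | hb
        · refine Finset.mem_biUnion.mpr ⟨x, hb, ?_⟩
          rw [SimpleGraph.mem_incidenceFinset]
          exact ⟨hedge, Sym2.mem_mk_left _ _⟩
        · refine Finset.mem_biUnion.mpr ⟨y, hb, ?_⟩
          rw [SimpleGraph.mem_incidenceFinset]
          exact ⟨hedge, Sym2.mem_mk_right _ _⟩
      · rcases hcross x y hadj.symm hxS hyS with hb | hb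
        · refine Finset.mem_biUnion.mpr ⟨x, hb, ?_⟩
          rw [SimpleGraph.mem_incidenceFinset]
          exact ⟨hedge, Sym2.mem_mk_right _ _⟩
        · refine Finset.mem_biUnion.mpr ⟨y, hb, ?_⟩
          rw [SimpleGraph.mem_incidenceFinset]
          exact ⟨hedge, Sym2.mem_mk_left _ _⟩
      · exact absurd hxS hyS
  calc edgeBoundary G S = hE.toFinset.card := h1
    _ ≤ (B.biUnion (fun b => G.incidenceFinset b)).card := Finset.card_le_card hsub
    _ ≤ ∑ b ∈ B, (G.incidenceFinset b).card := Finset.card_biUnion_le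
    _ = ∑ b ∈ B, G.degree b := Finset.sum_congr rfl fun b _ => by simp

end Boundary

end TwAux

/-- The trivial one-bag tree decomposition. -/
noncomputable def trivDecomp {V : Type} [Fintype V] [Nonempty V] (G : SimpleGraph V) :
    TreeDecomp G where
  ι := Unit
  instFin := inferInstance
  T := ⊥
  isTree := ⟨(SimpleGraph.connected_iff _).mpr
      ⟨fun a b => by rw [Subsingleton.elim a b], ⟨()⟩⟩, SimpleGraph.isAcyclic_bot⟩
  bag := fun _ => Finset.univ
  bag_cover := fun v => ⟨(), Finset.mem_univ v⟩
  bag_edge := fun u v _ => ⟨(), Finset.mem_univ u, Finset.mem_univ v⟩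
  bag_conn := fun v => (SimpleGraph.connected_iff _).mpr
      ⟨fun a b => by rw [Subsingleton.elim a b], ⟨⟨(), Finset.mem_univ v⟩⟩⟩

/-- Let `d ≥ 1`, `ε > 0`, and let `G` be a finite simple `d`-regular
graph with at least two vertices which is an `ε`-edge-expander.  Then
`tw(G) ≥ ε·|V(G)|/(4d) - 1`. -/
theorem treewidth_ge_of_regular_expander
    {V : Type} [Fintype V] [DecidableEq V] (G : SimpleGraph V) [DecidableRel G.Adj]
    (d : ℕ) (hd : 1 ≤ d) (ε : ℝ) (hε : 0 < ε) (hV : 2 ≤ Fintype.card V)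
    (hreg : G.IsRegularOfDegree d) (hexp : IsEdgeExpander G ε) :
    ε * (Fintype.card V : ℝ) / (4 * (d : ℝ)) - 1 ≤ (treewidth G : ℝ) := by
  classical
  have hVne : Nonempty V := Fintype.card_pos_iff.mp (by omega)
  set n := Fintype.card V with hn
  have hn2 : (2 : ℝ) ≤ (n : ℝ) := by exact_mod_cast hV
  have hd0 : (0 : ℝ) < (d : ℝ) := by exact_mod_cast hd
  -- ε ≤ d
  have hεd : ε ≤ (d : ℝ) := by
    obtain ⟨v⟩ := hVne
    have h1 := hexp {v} (by
      rw [Finset.card_singleton]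
      push_cast
      linarith)
    have h2 : edgeBoundary G {v} ≤ d := by
      have := TwAux.edgeBoundary_le_sum_degree G {v} {v}
        (fun u w _ hu _ => Or.inl hu)
      simpa [hreg v] using this
    rw [Finset.card_singleton] at h1
    push_cast at h1
    have h2' : (edgeBoundary G {v} : ℝ) ≤ (d : ℝ) := by exact_mod_cast h2
    linarith
  -- the key bound for an arbitrary tree decomposition
  have key : ∀ D : TreeDecomp G, ε * (n : ℝ) / (4 * (d : ℝ)) - 1 ≤ (D.width : ℝ) := by
    intro D
    letI : Fintype D.ι := D.instFin
    letI : DecidableEq D.ι := Classical.decEq _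
    obtain ⟨hιne, hT⟩ := SimpleGraph.isTree_iff_existsUnique_path.mp D.isTree
    have hT' : TwAux.UP D.T := hT
    set k := (Finset.univ : Finset D.ι).sup (fun t => (D.bag t).card) with hk
    have hk1 : 1 ≤ k := by
      obtain ⟨v⟩ := hVne
      obtain ⟨t, hvt⟩ := D.bag_cover v
      calc 1 ≤ (D.bag t).card := Finset.card_pos.mpr ⟨v, hvt⟩
        _ ≤ k := Finset.le_sup (f := fun t => (D.bag t).card) (Finset.mem_univ t)
    have hwidth : (D.width : ℝ) = (k : ℝ) - 1 := by
      have h0 : D.width = k - 1 := rfl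
      rw [h0, Nat.cast_sub hk1, Nat.cast_one]
    rw [hwidth]
    have hmain : ε * (n : ℝ) / (4 * (d : ℝ)) ≤ (k : ℝ) := by
      by_cases hcase : ε * (n : ℝ) / 4 ≤ (d : ℝ) * (k : ℝ)
      · rw [div_le_iff₀ (by positivity)]
        rw [div_le_iff₀ (by norm_num : (0:ℝ) < 4)] at hcase
        nlinarith
      · exfalso
        push_neg at hcase
        have hkn4 : (k : ℝ) < (n : ℝ) / 4 := by nlinarith
        -- choose bags for vertices
        set f : V → D.ι := fun v => (D.bag_cover v).choose with hf
        have hfmem : ∀ v, v ∈ D.bag (f v) := fun v => (D.bag_cover v).choose_spec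
        obtain ⟨t, hcent⟩ := TwAux.exists_centroid hT' f
        set h : D.ι → ℕ := fun s =>
          (Finset.univ.filter (fun v : V => v ∉ D.bag t ∧ TwAux.pen hT' t (f v) = s)).card
          with hh
        have hnotbag : ∀ v : V, v ∉ D.bag t → f v ≠ t := fun v hv he => hv (he ▸ hfmem v)
        have hsmall : ∀ s, (h s : ℝ) ≤ (n : ℝ) / 2 := by
          intro s
          have hle : h s ≤ TwAux.Wt hT' f t s := by
            apply Finset.card_le_card
            intro v hv
            rw [Finset.mem_filter] at hv ⊢
            exact ⟨Finset.mem_univ _, hnotbag v hv.2.1, hv.2.2⟩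
          have h2 := hcent s
          have h3 : 2 * h s ≤ n := by omega
          rw [le_div_iff₀ (by norm_num : (0:ℝ) < 2)]
          calc (h s : ℝ) * 2 = ((2 * h s : ℕ) : ℝ) := by push_cast; ring
            _ ≤ (n : ℝ) := by exact_mod_cast h3
        have hbagk : (D.bag t).card ≤ k :=
          Finset.le_sup (f := fun t => (D.bag t).card) (Finset.mem_univ t)
        have hbagn : (D.bag t).card ≤ n := by
          rw [hn]; exact (Finset.card_le_univ _).trans_eq Finset.card_univ
        -- total weight
        have hsum_all : ∑ s : D.ι, h s
            = (Finset.univ.filter (fun v : V => v ∉ D.bag t)).card := by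
          rw [Finset.card_eq_sum_card_fiberwise
            (f := fun v => TwAux.pen hT' t (f v)) (t := Finset.univ)
            (fun v _ => Finset.mem_univ _)]
          apply Finset.sum_congr rfl
          intro s _
          rw [hh, Finset.filter_filter]
        have hcompl : (Finset.univ.filter (fun v : V => v ∉ D.bag t)).card
            = n - (D.bag t).card := by
          have h1 := Finset.card_filter_add_card_filter_not
            (s := (Finset.univ : Finset V)) (p := fun v => v ∈ D.bag t)
          have h2 : (Finset.univ.filter (fun v : V => v ∈ D.bag t)) = D.bag t := by
            ext v; simp
          rw [h2, Finset.card_univ, ← hn] at h1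
          omega
        have htot : (n : ℝ) / 4 ≤ ∑ s : D.ι, (h s : ℝ) := by
          have heq : (∑ s : D.ι, (h s : ℝ)) = ((n - (D.bag t).card : ℕ) : ℝ) := by
            rw [← hcompl, ← hsum_all]
            push_cast
            rfl
          rw [heq, Nat.cast_sub hbagn]
          have hb : ((D.bag t).card : ℝ) ≤ (k : ℝ) := by exact_mod_cast hbagk
          linarith
        obtain ⟨A, hAuniv, hA1, hA2⟩ := TwAux.grouping (fun s => (h s : ℝ))
          (by linarith : (0:ℝ) < (n:ℝ)) (fun a => by positivity) Finset.univ
          (fun a _ => hsmall a) htot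
        set S : Finset V := Finset.univ.filter
          (fun v => v ∉ D.bag t ∧ TwAux.pen hT' t (f v) ∈ A) with hS
        have hScard : S.card = ∑ s ∈ A, h s := by
          rw [hS, Finset.card_eq_sum_card_fiberwise
            (f := fun v => TwAux.pen hT' t (f v)) (t := A)
            (fun v hv => (Finset.mem_filter.mp hv).2.2)]
          apply Finset.sum_congr rfl
          intro s hsA
          rw [hh, Finset.filter_filter]
          congr 1
          ext v
          simp only [Finset.mem_filter, Finset.mem_univ, true_and]
          constructor
          · rintro ⟨⟨h1, _⟩, h3⟩; exact ⟨h1, h3⟩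
          · rintro ⟨h1, h3⟩; exact ⟨⟨h1, h3 ▸ hsA⟩, h3⟩
        have hScardR : (S.card : ℝ) = ∑ s ∈ A, (h s : ℝ) := by
          rw [hScard]; push_cast; rfl
        have hS2 : (S.card : ℝ) ≤ (n : ℝ) / 2 := by rw [hScardR]; exact hA2
        have hS1 : (n : ℝ) / 4 ≤ (S.card : ℝ) := by rw [hScardR]; exact hA1
        have hexpS := hexp S (by rw [← hn]; exact hS2)
        -- boundary edges land in the bag of t
        have hcross : ∀ u v : V, G.Adj u v → u ∈ S → v ∉ S → v ∈ D.bag t := by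
          intro u v hadj huS hvS
          by_contra hvbag
          rw [hS, Finset.mem_filter] at huS
          obtain ⟨-, hubag, hupen⟩ := huS
          obtain ⟨i0, hui0, hvi0⟩ := D.bag_edge u v hadj
          have h1 : TwAux.pen hT' t (f u) = TwAux.pen hT' t i0 :=
            TwAux.pen_const_of_reachable hT' (W := {i | u ∈ D.bag i})
              (fun hm => hubag hm) ⟨f u, hfmem u⟩ ⟨i0, hui0⟩
              ((D.bag_conn u).preconnected _ _)
          have h2 : TwAux.pen hT' t (f v) = TwAux.pen hT' t i0 :=
            TwAux.pen_const_of_reachable hT' (W := {i | v ∈ D.bag i})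
              (fun hm => hvbag hm) ⟨f v, hfmem v⟩ ⟨i0, hvi0⟩
              ((D.bag_conn v).preconnected _ _)
          apply hvS
          rw [hS, Finset.mem_filter]
          refine ⟨Finset.mem_univ _, hvbag, ?_⟩
          rw [h2, ← h1]
          exact hupen
        have hbound := TwAux.edgeBoundary_le_sum_degree G S (D.bag t)
          (fun u v ha h1 h2 => Or.inr (hcross u v ha h1 h2))
        have hsumdeg : ∑ b ∈ D.bag t, G.degree b = d * (D.bag t).card := by
          rw [Finset.sum_congr rfl (fun b _ => hreg b), Finset.sum_const, smul_eq_mul,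
            mul_comm]
        rw [hsumdeg] at hbound
        have hEB : (edgeBoundary G S : ℝ) ≤ (d : ℝ) * ((D.bag t).card : ℝ) := by
          exact_mod_cast hbound
        have hb : ((D.bag t).card : ℝ) ≤ (k : ℝ) := by exact_mod_cast hbagk
        nlinarith [hexpS, hS1, hε.le]
    linarith
  -- assemble
  have hne : {m : ℕ | ∃ D : TreeDecomp G, D.width = m}.Nonempty := ⟨_, trivDecomp G, rfl⟩
  obtain ⟨D, hD⟩ := Nat.sInf_mem hne
  rw [treewidth, ← hD]
  exact key D
end

section
/- Let m ≥ 2 be an integer and let T_m be the complete m-ary tree of depth 2: a root with m children, each child having m leaf children (so every non-root internal vertex has degree m + 1). Then tw(T_m) = 1 and cc(T_m) = m. -/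
/-- The vertex set of the complete `m`-ary tree of depth 2: `none` is the root,
`some (Sum.inl i)` is the `i`-th child of the root, and `some (Sum.inr (i, j))` is the
`j`-th leaf child of the `i`-th child. -/
abbrev MAryVert (m : ℕ) : Type := Option (Fin m ⊕ Fin m × Fin m)

/-- The parent-child relation of the complete `m`-ary tree of depth 2. -/
def mAryRel (m : ℕ) : MAryVert m → MAryVert m → Prop
  | none, some (Sum.inl _) => True
  | some (Sum.inl i), some (Sum.inr p) => p.1 = i
  | _, _ => False

/-- The complete `m`-ary tree of depth 2: a root with `m` children, each child having `m`
leaf children (so every non-root internal vertex has degree `m + 1`). -/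
def mAryTree (m : ℕ) : SimpleGraph (MAryVert m) := SimpleGraph.fromRel (mAryRel m)


/-- root edge -/
def rootE {m : ℕ} (i : Fin m) : Sym2 (MAryVert m) := s(none, some (Sum.inl i))
/-- leaf edge -/
def leafE {m : ℕ} (i j : Fin m) : Sym2 (MAryVert m) :=
  s(some (Sum.inl i), some (Sum.inr (i, j)))

lemma adj_root {m : ℕ} (i : Fin m) : (mAryTree m).Adj none (some (Sum.inl i)) := by
  rw [mAryTree, SimpleGraph.fromRel_adj]
  exact ⟨by simp, Or.inl trivial⟩

lemma adj_leaf {m : ℕ} (i j : Fin m) :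
    (mAryTree m).Adj (some (Sum.inl i)) (some (Sum.inr (i, j))) := by
  rw [mAryTree, SimpleGraph.fromRel_adj]
  exact ⟨by simp, Or.inl rfl⟩

lemma adj_cases {m : ℕ} {u v : MAryVert m} (h : (mAryTree m).Adj u v) :
    (∃ i, (u = none ∧ v = some (Sum.inl i)) ∨ (v = none ∧ u = some (Sum.inl i))) ∨
    (∃ i j, (u = some (Sum.inl i) ∧ v = some (Sum.inr (i, j))) ∨
      (v = some (Sum.inl i) ∧ u = some (Sum.inr (i, j)))) := by
  rw [mAryTree, SimpleGraph.fromRel_adj] at h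
  obtain ⟨-, h | h⟩ := h
  · match u, v, h with
    | none, some (Sum.inl i), _ => exact Or.inl ⟨i, Or.inl ⟨rfl, rfl⟩⟩
    | some (Sum.inl i), some (Sum.inr p), h =>
        exact Or.inr ⟨i, p.2, Or.inl ⟨rfl, by rw [← h]⟩⟩
  · match u, v, h with
    | some (Sum.inl i), none, _ => exact Or.inl ⟨i, Or.inr ⟨rfl, rfl⟩⟩
    | some (Sum.inr p), some (Sum.inl i), h =>
        exact Or.inr ⟨i, p.2, Or.inr ⟨rfl, by rw [← h]⟩⟩

lemma edge_mem_iff {m : ℕ} (e : Sym2 (MAryVert m)) :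
    e ∈ (mAryTree m).edgeSet ↔ (∃ i, e = rootE i) ∨ ∃ i j, e = leafE i j := by
  constructor
  · induction e with
  | _ u v =>
    intro h
    rw [SimpleGraph.mem_edgeSet] at h
    rcases adj_cases h with ⟨i, ⟨hu, hv⟩ | ⟨hv, hu⟩⟩ | ⟨i, j, ⟨hu, hv⟩ | ⟨hv, hu⟩⟩
    · exact Or.inl ⟨i, by rw [hu, hv]; rfl⟩
    · exact Or.inl ⟨i, by rw [hu, hv, rootE, Sym2.eq_swap]⟩
    · exact Or.inr ⟨i, j, by rw [hu, hv]; rfl⟩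
    · exact Or.inr ⟨i, j, by rw [hu, hv, leafE, Sym2.eq_swap]⟩
  · rintro (⟨i, rfl⟩ | ⟨i, j, rfl⟩)
    · exact (adj_root i)
    · exact (adj_leaf i j)

/-- closed set lemma -/
lemma mem_of_reachable_of_closed {V : Type} {G : SimpleGraph V} {C : Set V}
    (hC : ∀ a b, G.Adj a b → a ∈ C → b ∈ C) {x y : V}
    (h : G.Reachable x y) (hy : y ∈ C) : x ∈ C := by
  obtain ⟨w⟩ := h
  induction w with
  | nil => exact hy
  | cons h p ih => exact hC _ _ h.symm (ih hy)

lemma star_induce_connected {V : Type} {G : SimpleGraph V} {S : Set V} {c : V}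
    (hc : c ∈ S) (h : ∀ x ∈ S, x ≠ c → G.Adj x c) : (G.induce S).Connected := by
  rw [SimpleGraph.connected_iff]
  refine ⟨?_, ⟨⟨c, hc⟩⟩⟩
  have key : ∀ x : S, (G.induce S).Reachable x ⟨c, hc⟩ := by
    rintro ⟨x, hx⟩
    by_cases hxc : x = c
    · subst hxc; exact SimpleGraph.Reachable.refl _
    · exact SimpleGraph.Adj.reachable (by exact h x hx hxc)
  intro x y
  exact (key x).trans (key y).symm

lemma mAryTree_connected (m : ℕ) : (mAryTree m).Connected := by
  rw [SimpleGraph.connected_iff]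
  refine ⟨?_, ⟨none⟩⟩
  have key : ∀ x : MAryVert m, (mAryTree m).Reachable x none := by
    intro x
    match x with
    | none => exact SimpleGraph.Reachable.refl _
    | some (Sum.inl i) => exact (adj_root i).symm.reachable
    | some (Sum.inr (i, j)) =>
        exact ((adj_leaf i j).symm.reachable).trans (adj_root i).symm.reachable
  intro x y
  exact (key x).trans (key y).symm

lemma not_reach_root {m : ℕ} (i : Fin m) :
    ¬((mAryTree m) \ SimpleGraph.fromEdgeSet {rootE i}).Reachable none (some (Sum.inl i)) := by
  intro h
  set C : Set (MAryVert m) :=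
    {x | x = some (Sum.inl i) ∨ ∃ j, x = some (Sum.inr (i, j))} with hCdef
  have hclosed : ∀ a b, ((mAryTree m) \ SimpleGraph.fromEdgeSet {rootE i}).Adj a b →
      a ∈ C → b ∈ C := by
    intro a b hab ha
    rw [SimpleGraph.sdiff_adj, SimpleGraph.fromEdgeSet_adj] at hab
    obtain ⟨hG, hne⟩ := hab
    have hneq : s(a, b) ≠ rootE i := fun he => hne ⟨he ▸ Set.mem_singleton _, hG.ne⟩
    rcases adj_cases hG with ⟨i', ⟨hu, hv⟩ | ⟨hv, hu⟩⟩ | ⟨i', j', ⟨hu, hv⟩ | ⟨hv, hu⟩⟩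
    · subst hu hv; rcases ha with h | ⟨j, h⟩ <;> simp at h
    · subst hu hv
      rcases ha with h | ⟨j, h⟩
      · exfalso; apply hneq
        simp only [Option.some_inj, Sum.inl.injEq] at h
        rw [h, rootE, Sym2.eq_swap]
      · simp at h
    · subst hu hv
      rcases ha with h | ⟨j, h⟩
      · simp only [Option.some_inj, Sum.inl.injEq] at h
        exact Or.inr ⟨j', by rw [h]⟩
      · simp at h
    · subst hu hv
      rcases ha with h | ⟨j, h⟩
      · simp at h
      · simp only [Option.some_inj, Sum.inr.injEq, Prod.mk.injEq] at h
        exact Or.inl (by rw [h.1])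
  have : (none : MAryVert m) ∈ C :=
    mem_of_reachable_of_closed hclosed h (Or.inl rfl)
  rcases this with h | ⟨j, h⟩ <;> simp at h

lemma not_reach_leaf {m : ℕ} (i j : Fin m) :
    ¬((mAryTree m) \ SimpleGraph.fromEdgeSet {leafE i j}).Reachable
      (some (Sum.inl i)) (some (Sum.inr (i, j))) := by
  intro h
  set C : Set (MAryVert m) := {x | x = some (Sum.inr (i, j))} with hCdef
  have hclosed : ∀ a b, ((mAryTree m) \ SimpleGraph.fromEdgeSet {leafE i j}).Adj a b →
      a ∈ C → b ∈ C := by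
    intro a b hab ha
    rw [SimpleGraph.sdiff_adj, SimpleGraph.fromEdgeSet_adj] at hab
    obtain ⟨hG, hne⟩ := hab
    have hneq : s(a, b) ≠ leafE i j := fun he => hne ⟨he ▸ Set.mem_singleton _, hG.ne⟩
    rcases adj_cases hG with ⟨i', ⟨hu, hv⟩ | ⟨hv, hu⟩⟩ | ⟨i', j', ⟨hu, hv⟩ | ⟨hv, hu⟩⟩
    · subst hu hv; simp [hCdef] at ha
    · subst hu hv; simp [hCdef] at ha
    · subst hu hv; simp [hCdef] at ha
    · subst hu hv
      simp only [hCdef, Set.mem_setOf_eq, Option.some_inj, Sum.inr.injEq,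
        Prod.mk.injEq] at ha
      exfalso; apply hneq
      rw [ha.1, ha.2, leafE, Sym2.eq_swap]
  have : (some (Sum.inl i) : MAryVert m) ∈ C :=
    mem_of_reachable_of_closed hclosed h rfl
  simp [hCdef] at this

lemma mAryTree_isTree (m : ℕ) : (mAryTree m).IsTree := by
  refine ⟨mAryTree_connected m, ?_⟩
  rw [SimpleGraph.isAcyclic_iff_forall_adj_isBridge]
  intro v w hvw
  rw [SimpleGraph.isBridge_iff]
  rcases adj_cases hvw with ⟨i, ⟨hu, hv⟩ | ⟨hv, hu⟩⟩ | ⟨i, j, ⟨hu, hv⟩ | ⟨hv, hu⟩⟩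
  · subst hu hv; exact fun h => not_reach_root i h
  · subst hu hv
    rw [show s(some (Sum.inl i), (none : MAryVert m)) = rootE i from Sym2.eq_swap]
    exact fun h => not_reach_root i h.symm
  · subst hu hv; exact fun h => not_reach_leaf i j h
  · subst hu hv
    rw [show s(some (Sum.inr (i,j)), (some (Sum.inl i) : MAryVert m)) = leafE i j
      from Sym2.eq_swap]
    exact fun h => not_reach_leaf i j h.symm

def mBag {m : ℕ} : MAryVert m → Finset (MAryVert m)
  | none => {none}
  | some (Sum.inl i) => {some (Sum.inl i), none}
  | some (Sum.inr p) => {some (Sum.inr p), some (Sum.inl p.1)}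

noncomputable def mDecomp (m : ℕ) : TreeDecomp (mAryTree m) where
  ι := MAryVert m
  instFin := inferInstance
  T := mAryTree m
  isTree := mAryTree_isTree m
  bag := mBag
  bag_cover := by
    intro v
    exact ⟨v, by match v with
      | none => simp [mBag]
      | some (Sum.inl i) => simp [mBag]
      | some (Sum.inr p) => simp [mBag]⟩
  bag_edge := by
    intro u v huv
    rcases adj_cases huv with ⟨i, ⟨hu, hv⟩ | ⟨hv, hu⟩⟩ | ⟨i, j, ⟨hu, hv⟩ | ⟨hv, hu⟩⟩
    · exact ⟨some (Sum.inl i), by subst hu hv; simp [mBag]⟩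
    · exact ⟨some (Sum.inl i), by subst hu hv; simp [mBag]⟩
    · exact ⟨some (Sum.inr (i, j)), by subst hu hv; simp [mBag]⟩
    · exact ⟨some (Sum.inr (i, j)), by subst hu hv; simp [mBag]⟩
  bag_conn := by
    intro v
    match v with
    | none =>
        apply star_induce_connected (c := (none : MAryVert m)) (by simp [mBag])
        intro x hx hxne
        match x with
        | none => exact absurd rfl hxne
        | some (Sum.inl i) => exact (adj_root i).symm
        | some (Sum.inr p) => simp [mBag] at hx
    | some (Sum.inl i) =>
        apply star_induce_connected (c := (some (Sum.inl i) : MAryVert m)) (by simp [mBag])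
        intro x hx hxne
        match x with
        | none => simp [mBag] at hx
        | some (Sum.inl i') =>
            simp only [Set.mem_setOf_eq, mBag, Finset.mem_insert, Finset.mem_singleton] at hx
            rcases hx with h | h
            · simp only [Option.some_inj, Sum.inl.injEq] at h; exact absurd (by rw [h]) hxne
            · simp at h
        | some (Sum.inr p) =>
            simp only [Set.mem_setOf_eq, mBag, Finset.mem_insert, Finset.mem_singleton] at hx
            rcases hx with h | h
            · simp at h
            · obtain ⟨p1, p2⟩ := p
              simp only [Option.some_inj, Sum.inl.injEq] at h
              subst h
              exact (adj_leaf _ p2).symm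
    | some (Sum.inr p) =>
        apply star_induce_connected (c := (some (Sum.inr p) : MAryVert m)) (by simp [mBag])
        intro x hx hxne
        match x with
        | none => simp [mBag] at hx
        | some (Sum.inl i') => simp [mBag] at hx
        | some (Sum.inr p') =>
            simp only [Set.mem_setOf_eq, mBag, Finset.mem_insert, Finset.mem_singleton] at hx
            rcases hx with h | h
            · simp only [Option.some_inj, Sum.inr.injEq] at h
              exact absurd (by rw [h]) hxne
            · simp at h

lemma treewidth_mAry (m : ℕ) (hm : 2 ≤ m) : treewidth (mAryTree m) = 1 := by
  have hm0 : 0 < m := by omega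
  apply le_antisymm
  · apply Nat.sInf_le
    refine ⟨mDecomp m, ?_⟩
    have hsup : (@Finset.univ (MAryVert m) _).sup (fun t => (mBag t).card) = 2 := by
      apply le_antisymm
      · apply Finset.sup_le
        intro t _
        match t with
        | none => simp [mBag]
        | some (Sum.inl i) => exact Finset.card_insert_le _ _ |>.trans (by simp)
        | some (Sum.inr p) => exact Finset.card_insert_le _ _ |>.trans (by simp)
      · calc (2:ℕ) = (mBag (some (Sum.inl ⟨0, hm0⟩)) : Finset (MAryVert m)).card := by
              rw [show (mBag (some (Sum.inl ⟨0, hm0⟩)) : Finset (MAryVert m)) =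
                {some (Sum.inl ⟨0, hm0⟩), none} from rfl, Finset.card_pair (by simp)]
          _ ≤ _ := Finset.le_sup (f := fun t : MAryVert m => (mBag t).card)
              (Finset.mem_univ _)
    show (@Finset.univ (MAryVert m) _).sup (fun t => (mBag t).card) - 1 = 1
    rw [hsup]
  · apply le_csInf
    · exact ⟨(mDecomp m).width, ⟨mDecomp m, rfl⟩⟩
    rintro n ⟨D, rfl⟩
    obtain ⟨t, hu, hv⟩ := D.bag_edge none (some (Sum.inl ⟨0, hm0⟩)) (adj_root _)
    have h2 : 2 ≤ (D.bag t).card := by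
      apply Finset.one_lt_card.mpr ⟨none, hu, some (Sum.inl ⟨0, hm0⟩), hv, by simp⟩
    have : 2 ≤ (@Finset.univ D.ι D.instFin).sup (fun t => (D.bag t).card) :=
      le_trans h2 (Finset.le_sup (f := fun t => (D.bag t).card)
        (@Finset.mem_univ _ D.instFin t))
    unfold TreeDecomp.width
    omega

lemma rootE_inj {m : ℕ} {i i' : Fin m} : rootE i = rootE i' ↔ i = i' := by
  simp [rootE, Sym2.eq_iff]

lemma leafE_inj {m : ℕ} {i j i' j' : Fin m} :
    leafE i j = leafE i' j' ↔ i = i' ∧ j = j' := by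
  simp [leafE, Sym2.eq_iff, Prod.ext_iff]

lemma leafE_ne_rootE {m : ℕ} {i j i' : Fin m} : leafE i j ≠ rootE i' := by
  simp [leafE, rootE, Sym2.eq_iff]

lemma mem_take_iff {α : Type*} {l : List α} {n : ℕ} {e : α} :
    e ∈ l.take n ↔ ∃ i, ∃ h : i < l.length, i < n ∧ l[i] = e := by
  constructor
  · intro h
    obtain ⟨i, hi, heq⟩ := List.mem_iff_getElem.mp h
    have hi' : i < min n l.length := by simpa using hi
    exact ⟨i, lt_of_lt_of_le hi' (min_le_right _ _),
      lt_of_lt_of_le hi' (min_le_left _ _), by rw [← heq, List.getElem_take]⟩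
  · rintro ⟨i, h, hn, rfl⟩
    apply List.mem_iff_getElem.mpr
    refine ⟨i, by simp [hn, h], by rw [List.getElem_take]⟩

lemma cc_lower (m : ℕ) (hm : 2 ≤ m) (l : List (Sym2 (MAryVert m)))
    (hl : IsEdgeOrder (mAryTree m) l) : m ≤ listComplexity (mAryTree m) l := by
  have hm0 : 0 < m := by omega
  have hne : l ≠ [] := by
    intro h
    have := (hl.2 (rootE ⟨0, hm0⟩)).mpr ((edge_mem_iff _).mpr (Or.inl ⟨_, rfl⟩))
    rw [h] at this; simp at this
  have hlen : 0 < l.length := List.length_pos_iff.mpr hne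
  set i0 : Fin l.length := ⟨0, hlen⟩ with hi0
  set e0 : Sym2 (MAryVert m) := l.get i0 with he0def
  have he0 : e0 ∈ (mAryTree m).edgeSet := (hl.2 e0).mp (by rw [he0def]; exact List.get_mem l i0)
  have hsup : mergedDeg (mAryTree m) (l.take 1) e0 ≤ listComplexity (mAryTree m) l := by
    have := Finset.le_sup (f := fun i : Fin l.length =>
      mergedDeg (mAryTree m) (l.take (i + 1)) (l.get i)) (Finset.mem_univ i0)
    simpa [listComplexity, he0def, hi0] using this
  refine le_trans ?_ hsup
  set S : Set (Sym2 (MAryVert m)) := {f : Sym2 (MAryVert m) | f ∈ (mAryTree m).edgeSet ∧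
    f ∉ l.take 1 ∧ ∃ x ∈ f, ∃ y ∈ e0,
      (SimpleGraph.fromEdgeSet {g : Sym2 (MAryVert m) | g ∈ l.take 1}).Reachable x y} with hS
  have htake : ∀ f, f ∈ l.take 1 → f = e0 := by
    intro f hf
    obtain ⟨i, h, hn, rfl⟩ := mem_take_iff.mp hf
    interval_cases i
    rfl
  have key : ∃ φ : Fin m → Sym2 (MAryVert m), Function.Injective φ ∧ ∀ j, φ j ∈ S := by
    rcases (edge_mem_iff e0).mp he0 with ⟨i, hi⟩ | ⟨i, j0, hi⟩
    · refine ⟨fun j => leafE i j, fun a b hab => ((leafE_inj).mp hab).2, fun j => ?_⟩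
      refine ⟨(edge_mem_iff _).mpr (Or.inr ⟨i, j, rfl⟩), ?_, ?_⟩
      · intro hmem
        exact leafE_ne_rootE ((htake _ hmem).trans hi)
      · exact ⟨some (Sum.inl i), by simp [leafE], some (Sum.inl i),
          by simp [hi, rootE], SimpleGraph.Reachable.refl _⟩
    · refine ⟨fun j => if j = j0 then rootE i else leafE i j, ?_, fun j => ?_⟩
      · intro a b hab
        by_cases ha : a = j0 <;> by_cases hb : b = j0 <;> simp [ha, hb] at hab ⊢
        · exact leafE_ne_rootE hab.symm |>.elim
        · exact leafE_ne_rootE hab |>.elim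
        · exact (leafE_inj.mp hab).2
      · by_cases hj : j = j0 <;> simp only [hj, if_true, if_false, hj]
        · refine ⟨(edge_mem_iff _).mpr (Or.inl ⟨i, rfl⟩), ?_, ?_⟩
          · intro hmem
            exact leafE_ne_rootE ((htake _ hmem).trans hi).symm
          · exact ⟨some (Sum.inl i), by simp [rootE], some (Sum.inl i),
              by simp [hi, leafE], SimpleGraph.Reachable.refl _⟩
        · refine ⟨(edge_mem_iff _).mpr (Or.inr ⟨i, j, rfl⟩), ?_, ?_⟩
          · intro hmem
            have := (htake _ hmem).trans hi
            exact hj (leafE_inj.mp this).2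
          · exact ⟨some (Sum.inl i), by simp [leafE], some (Sum.inl i),
              by simp [hi, leafE], SimpleGraph.Reachable.refl _⟩
  obtain ⟨φ, hinj, hmem⟩ := key
  calc m = (φ '' Set.univ).ncard := by
        rw [Set.ncard_image_of_injective _ hinj, Set.ncard_univ]; simp
    _ ≤ S.ncard := Set.ncard_le_ncard (by rintro f ⟨j, -, rfl⟩; exact hmem j) (Set.toFinite S)
    _ = mergedDeg (mAryTree m) (l.take 1) e0 := rfl

def stepE (m : ℕ) (i : Fin m) (r : ℕ) : Sym2 (MAryVert m) :=
  if h : r < m then leafE i ⟨r, h⟩ else rootE i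

def Ford (m : ℕ) (k : ℕ) : Sym2 (MAryVert m) :=
  if h : k / (m + 1) < m then stepE m ⟨k / (m + 1), h⟩ (k % (m + 1)) else s(none, none)

def ord (m : ℕ) : List (Sym2 (MAryVert m)) :=
  List.ofFn (fun k : Fin (m * (m + 1)) => Ford m k)

lemma encode_lt {m : ℕ} (i : Fin m) {r : ℕ} (hr : r < m + 1) :
    (m + 1) * i + r < m * (m + 1) := by
  calc (m + 1) * i + r < (m + 1) * i + (m + 1) := by omega
    _ = (m + 1) * (i + 1) := by ring
    _ ≤ (m + 1) * m := Nat.mul_le_mul_left _ i.2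
    _ = m * (m + 1) := Nat.mul_comm _ _

lemma encode_div {m : ℕ} (i : Fin m) {r : ℕ} (hr : r < m + 1) :
    ((m + 1) * i + r) / (m + 1) = i := by
  rw [Nat.mul_add_div (Nat.succ_pos m), Nat.div_eq_of_lt hr, Nat.add_zero]

lemma encode_mod {m : ℕ} (i : Fin m) {r : ℕ} (hr : r < m + 1) :
    ((m + 1) * i + r) % (m + 1) = r := by
  rw [Nat.mul_add_mod, Nat.mod_eq_of_lt hr]

lemma Ford_leaf {m : ℕ} (i j : Fin m) : Ford m ((m + 1) * i + j) = leafE i j := by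
  have hj : (j : ℕ) < m + 1 := lt_trans j.2 (Nat.lt_succ_self m)
  rw [Ford]
  rw [dif_pos (by rw [encode_div i hj]; exact i.2)]
  rw [stepE, dif_pos (by rw [encode_mod i hj]; exact j.2)]
  congr 1 <;> [skip; rw [Fin.ext_iff]] <;> simp [encode_div i hj, encode_mod i hj]

lemma Ford_root {m : ℕ} (i : Fin m) : Ford m ((m + 1) * i + m) = rootE i := by
  have hmm : m < m + 1 := Nat.lt_succ_self m
  rw [Ford]
  rw [dif_pos (by rw [encode_div i hmm]; exact i.2)]
  rw [stepE, dif_neg (by rw [encode_mod i hmm]; omega)]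
  congr 1
  rw [Fin.ext_iff]; simp [encode_div i hmm]

lemma Ford_cases {m : ℕ} {k : ℕ} (hk : k < m * (m + 1)) :
    ∃ i : Fin m, (i : ℕ) = k / (m + 1) ∧
      ((∃ j : Fin m, (j : ℕ) = k % (m + 1) ∧ Ford m k = leafE i j) ∨
        (k % (m + 1) = m ∧ Ford m k = rootE i)) := by
  have hdiv : k / (m + 1) < m := (Nat.div_lt_iff_lt_mul (Nat.succ_pos m)).mpr hk
  have hmod : k % (m + 1) < m + 1 := Nat.mod_lt _ (Nat.succ_pos m)
  refine ⟨⟨k / (m + 1), hdiv⟩, rfl, ?_⟩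
  by_cases h : k % (m + 1) < m
  · exact Or.inl ⟨⟨k % (m + 1), h⟩, rfl, by rw [Ford, dif_pos hdiv, stepE, dif_pos h]⟩
  · exact Or.inr ⟨by omega, by rw [Ford, dif_pos hdiv, stepE, dif_neg h]⟩

lemma Ford_injOn {m : ℕ} {k k' : ℕ} (hk : k < m * (m + 1)) (hk' : k' < m * (m + 1))
    (h : Ford m k = Ford m k') : k = k' := by
  obtain ⟨i, hi, hc⟩ := Ford_cases hk
  obtain ⟨i', hi', hc'⟩ := Ford_cases hk'
  have e1 := Nat.div_add_mod k (m + 1)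
  have e2 := Nat.div_add_mod k' (m + 1)
  rcases hc with ⟨j, hj, he⟩ | ⟨hj, he⟩ <;> rcases hc' with ⟨j', hj', he'⟩ | ⟨hj', he'⟩
  · rw [he, he'] at h
    obtain ⟨hii, hjj⟩ := leafE_inj.mp h
    subst hii; subst hjj
    rw [← hi, ← hj] at e1
    rw [← hi', ← hj'] at e2
    omega
  · rw [he, he'] at h; exact absurd h leafE_ne_rootE
  · rw [he, he'] at h; exact absurd h.symm leafE_ne_rootE
  · rw [he, he'] at h
    have hii := rootE_inj.mp h
    subst hii
    rw [← hi] at e1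
    rw [← hi'] at e2
    omega

lemma ord_length {m : ℕ} : (ord m).length = m * (m + 1) := by rw [ord, List.length_ofFn]

lemma ord_getElem {m : ℕ} (k : ℕ) (hk : k < (ord m).length) : (ord m)[k] = Ford m k := by
  show (List.ofFn _)[k]'(by simpa [ord] using hk) = _
  rw [List.getElem_ofFn]

lemma ord_get {m : ℕ} (k : Fin (ord m).length) : (ord m).get k = Ford m k.val := by
  rw [List.get_eq_getElem]; exact ord_getElem k.val k.2


lemma mem_ord_take {m : ℕ} {n : ℕ} {e : Sym2 (MAryVert m)} :
    e ∈ (ord m).take n ↔ ∃ k, k < m * (m + 1) ∧ k < n ∧ Ford m k = e := by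
  rw [mem_take_iff]
  constructor
  · rintro ⟨i, h, hn, rfl⟩
    exact ⟨i, by rw [← ord_length]; exact h, hn, (ord_getElem i h).symm⟩
  · rintro ⟨k, hk, hn, rfl⟩
    have hk' : k < (ord m).length := by rw [ord_length]; exact hk
    exact ⟨k, hk', hn, ord_getElem k hk'⟩

lemma ord_isEdgeOrder (m : ℕ) : IsEdgeOrder (mAryTree m) (ord m) := by
  constructor
  · rw [ord, List.nodup_ofFn]
    intro a b hab
    exact Fin.ext (Ford_injOn a.2 b.2 hab)
  · intro e
    rw [ord, List.mem_ofFn]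
    constructor
    · rintro ⟨k, rfl⟩
      show Ford m (k : ℕ) ∈ (mAryTree m).edgeSet
      obtain ⟨i, -, hc⟩ := Ford_cases k.2
      rcases hc with ⟨j, -, he⟩ | ⟨-, he⟩
      · rw [he]; exact (edge_mem_iff _).mpr (Or.inr ⟨i, j, rfl⟩)
      · rw [he]; exact (edge_mem_iff _).mpr (Or.inl ⟨i, rfl⟩)
    · intro he
      rcases (edge_mem_iff e).mp he with ⟨i, rfl⟩ | ⟨i, j, rfl⟩
      · exact ⟨⟨(m + 1) * i + m, encode_lt i (Nat.lt_succ_self m)⟩, Ford_root i⟩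
      · exact ⟨⟨(m + 1) * i + j, encode_lt i (lt_trans j.2 (Nat.lt_succ_self m))⟩,
          Ford_leaf i j⟩

lemma ord_complexity_le (m : ℕ) (hm : 2 ≤ m) :
    listComplexity (mAryTree m) (ord m) ≤ m := by
  have hm0 : 0 < m := by omega
  apply Finset.sup_le
  intro kf _
  have hK : (kf : ℕ) < m * (m + 1) := by rw [← ord_length]; exact kf.2
  rw [ord_get kf, mergedDeg]
  set K : ℕ := (kf : ℕ) with hKdef
  obtain ⟨iF, hiF, hc⟩ := Ford_cases hK
  have hKeq : (m + 1) * (K / (m + 1)) + K % (m + 1) = K := Nat.div_add_mod K (m + 1)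
  have hlex : ∀ k', k' ≤ K →
      k' / (m + 1) < K / (m + 1) ∨
        (k' / (m + 1) = K / (m + 1) ∧ k' % (m + 1) ≤ K % (m + 1)) := by
    intro k' hle
    have h1 := Nat.div_add_mod k' (m + 1)
    have hd : k' / (m + 1) ≤ K / (m + 1) := Nat.div_le_div_right hle
    rcases lt_or_eq_of_le hd with h | h
    · exact Or.inl h
    · right; refine ⟨h, ?_⟩; rw [h] at h1; omega
  -- the done-set membership
  have hDone : ∀ g : Sym2 (MAryVert m), g ∈ (ord m).take (K + 1) ↔
      ∃ k', k' < m * (m + 1) ∧ k' ≤ K ∧ Ford m k' = g := by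
    intro g
    rw [mem_ord_take]
    constructor
    · rintro ⟨k', h1, h2, h3⟩; exact ⟨k', h1, by omega, h3⟩
    · rintro ⟨k', h1, h2, h3⟩; exact ⟨k', h1, by omega, h3⟩
  rcases hc with ⟨jF, hjF, heq⟩ | ⟨hmod, heq⟩
  · -- leaf step
    rw [heq]
    set C : Set (MAryVert m) := {x | x = some (Sum.inl iF) ∨
      ∃ s : Fin m, (s : ℕ) ≤ (jF : ℕ) ∧ x = some (Sum.inr (iF, s))} with hC
    have hclosed : ∀ a b,
        (SimpleGraph.fromEdgeSet {g : Sym2 (MAryVert m) | g ∈ (ord m).take (K + 1)}).Adj a b →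
        a ∈ C → b ∈ C := by
      intro a b hab ha
      rw [SimpleGraph.fromEdgeSet_adj] at hab
      obtain ⟨hmem, -⟩ := hab
      obtain ⟨k', hk', hleK, hFk'⟩ := (hDone _).mp hmem
      obtain ⟨i', hi', hc'⟩ := Ford_cases hk'
      rcases hc' with ⟨j', hj', he'⟩ | ⟨hj', he'⟩
      · have hab2 : s(a, b) = leafE i' j' := by rw [← he', hFk']
        rw [leafE, Sym2.eq_iff] at hab2
        rcases hab2 with ⟨ha1, hb1⟩ | ⟨ha1, hb1⟩
        · -- a = inl i', b = inr (i', j')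
          subst ha1 hb1
          rcases ha with h | ⟨s, hs, h⟩
          · simp only [Option.some_inj, Sum.inl.injEq] at h
            subst h
            have hdeq : k' / (m + 1) = K / (m + 1) := by rw [← hi', ← hiF]
            have hmle : k' % (m + 1) ≤ K % (m + 1) := by
              rcases hlex k' hleK with h' | ⟨-, h'⟩
              · omega
              · exact h'
            exact Or.inr ⟨j', by omega, rfl⟩
          · simp at h
        · -- a = inr (i', j'), b = inl i'
          subst ha1 hb1
          rcases ha with h | ⟨s, hs, h⟩
          · simp at h
          · simp only [Option.some_inj, Sum.inr.injEq, Prod.mk.injEq] at h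
            exact Or.inl (by rw [h.1])
      · -- root edge among done: impossible to touch C
        exfalso
        have hab2 : s(a, b) = rootE i' := by rw [← he', hFk']
        rw [rootE, Sym2.eq_iff] at hab2
        have haC : a = some (Sum.inl i') := by
          rcases hab2 with ⟨ha1, -⟩ | ⟨ha1, hb1⟩
          · subst ha1
            rcases ha with h | ⟨s, hs, h⟩ <;> simp at h
          · exact ha1
        subst haC
        have hii : i' = iF := by
          rcases ha with h | ⟨s, hs, h⟩
          · simpa using h
          · simp at h
        subst hii
        have hdeq : k' / (m + 1) = K / (m + 1) := by rw [← hi', ← hiF]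
        rcases hlex k' hleK with h' | ⟨-, h'⟩
        · omega
        · have : (jF : ℕ) < m := jF.2
          omega
    have hyC : ∀ y ∈ leafE iF jF, y ∈ C := by
      intro y hy
      rw [leafE, Sym2.mem_iff] at hy
      rcases hy with rfl | rfl
      · exact Or.inl rfl
      · exact Or.inr ⟨jF, le_refl _, rfl⟩
    set Tl : Finset (Sym2 (MAryVert m)) := insert (rootE iF)
      ((Finset.univ.filter fun s : Fin m => (jF : ℕ) < (s : ℕ)).image (leafE iF)) with hTl
    have hsub : {f : Sym2 (MAryVert m) | f ∈ (mAryTree m).edgeSet ∧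
        f ∉ (ord m).take (K + 1) ∧ ∃ x ∈ f, ∃ y ∈ leafE iF jF,
        (SimpleGraph.fromEdgeSet
          {g : Sym2 (MAryVert m) | g ∈ (ord m).take (K + 1)}).Reachable x y} ⊆ ↑Tl := by
      rintro f ⟨hfE, hfD, x, hxf, y, hye, hreach⟩
      have hxC : x ∈ C := mem_of_reachable_of_closed hclosed hreach (hyC y hye)
      rcases (edge_mem_iff f).mp hfE with ⟨i'', rfl⟩ | ⟨i'', j'', rfl⟩
      · rw [rootE, Sym2.mem_iff] at hxf
        rcases hxf with rfl | rfl
        · exfalso; rcases hxC with h | ⟨s, hs, h⟩ <;> simp at h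
        · have hii : i'' = iF := by
            rcases hxC with h | ⟨s, hs, h⟩
            · simpa using h
            · simp at h
          rw [hii]
          exact Finset.mem_coe.mpr (Finset.mem_insert_self _ _)
      · have hii : i'' = iF := by
          rw [leafE, Sym2.mem_iff] at hxf
          rcases hxf with rfl | rfl
          · rcases hxC with h | ⟨s, hs, h⟩
            · simpa using h
            · simp at h
          · rcases hxC with h | ⟨s, hs, h⟩
            · simp at h
            · simp only [Option.some_inj, Sum.inr.injEq, Prod.mk.injEq] at h
              exact h.1
        have hjlt : (jF : ℕ) < (j'' : ℕ) := by
          by_contra hnot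
          push_neg at hnot
          apply hfD
          apply (hDone _).mpr
          refine ⟨(m + 1) * (iF : ℕ) + (j'' : ℕ),
            encode_lt iF (lt_trans j''.2 (Nat.lt_succ_self m)), ?_, by
              rw [hii]; exact Ford_leaf iF j''⟩
          have : (m + 1) * (iF : ℕ) + (jF : ℕ) = K := by rw [hiF, hjF]; exact hKeq
          omega
        apply Finset.mem_coe.mpr
        apply Finset.mem_insert_of_mem
        rw [hii]
        exact Finset.mem_image.mpr ⟨j'', Finset.mem_filter.mpr ⟨Finset.mem_univ _, hjlt⟩, rfl⟩
    calc Set.ncard _ ≤ (↑Tl : Set (Sym2 (MAryVert m))).ncard :=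
          Set.ncard_le_ncard hsub (Set.toFinite _)
      _ = Tl.card := Set.ncard_coe_finset _
      _ ≤ m := by
          have h1 : Tl.card ≤ ((Finset.univ.filter
              fun s : Fin m => (jF : ℕ) < (s : ℕ)).image (leafE iF)).card + 1 :=
            Finset.card_insert_le _ _
          have h2 : ((Finset.univ.filter fun s : Fin m => (jF : ℕ) < (s : ℕ)).image
              (leafE iF)).card ≤ (Finset.univ.filter
              fun s : Fin m => (jF : ℕ) < (s : ℕ)).card := Finset.card_image_le
          have h3 : (Finset.univ.filter fun s : Fin m => (jF : ℕ) < (s : ℕ)) ⊆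
              Finset.univ.erase ⟨0, hm0⟩ := by
            intro s hs
            rw [Finset.mem_filter] at hs
            rw [Finset.mem_erase]
            refine ⟨?_, Finset.mem_univ _⟩
            intro h0
            rw [h0] at hs
            simp at hs
          have h4 := Finset.card_le_card h3
          rw [Finset.card_erase_of_mem (Finset.mem_univ _)] at h4
          simp only [Finset.card_univ, Fintype.card_fin] at h4
          omega
  · -- root step
    rw [heq]
    have hmodm : K % (m + 1) = m := hmod
    set C : Set (MAryVert m) := {x | x = none ∨ ∃ i' : Fin m, (i' : ℕ) ≤ (iF : ℕ) ∧
      (x = some (Sum.inl i') ∨ ∃ j : Fin m, x = some (Sum.inr (i', j)))} with hC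
    have hclosed : ∀ a b,
        (SimpleGraph.fromEdgeSet {g : Sym2 (MAryVert m) | g ∈ (ord m).take (K + 1)}).Adj a b →
        a ∈ C → b ∈ C := by
      intro a b hab _
      rw [SimpleGraph.fromEdgeSet_adj] at hab
      obtain ⟨hmem, -⟩ := hab
      obtain ⟨k', hk', hleK, hFk'⟩ := (hDone _).mp hmem
      obtain ⟨i', hi', hc'⟩ := Ford_cases hk'
      have hile : (i' : ℕ) ≤ (iF : ℕ) := by
        rcases hlex k' hleK with h' | ⟨h', -⟩ <;> omega
      rcases hc' with ⟨j', hj', he'⟩ | ⟨hj', he'⟩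
      · have hab2 : s(a, b) = leafE i' j' := by rw [← he', hFk']
        rw [leafE, Sym2.eq_iff] at hab2
        rcases hab2 with ⟨-, hb1⟩ | ⟨-, hb1⟩
        · exact Or.inr ⟨i', hile, Or.inr ⟨j', hb1⟩⟩
        · exact Or.inr ⟨i', hile, Or.inl hb1⟩
      · have hab2 : s(a, b) = rootE i' := by rw [← he', hFk']
        rw [rootE, Sym2.eq_iff] at hab2
        rcases hab2 with ⟨-, hb1⟩ | ⟨-, hb1⟩
        · exact Or.inr ⟨i', hile, Or.inl hb1⟩
        · exact Or.inl hb1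
    have hyC : ∀ y ∈ rootE iF, y ∈ C := by
      intro y hy
      rw [rootE, Sym2.mem_iff] at hy
      rcases hy with rfl | rfl
      · exact Or.inl rfl
      · exact Or.inr ⟨iF, le_refl _, Or.inl rfl⟩
    set Tr : Finset (Sym2 (MAryVert m)) :=
      (Finset.univ.filter fun i' : Fin m => (iF : ℕ) < (i' : ℕ)).image rootE with hTr
    have hKval : (m + 1) * (iF : ℕ) + m = K := by
      have h5 := hKeq
      rw [hmodm] at h5
      rw [hiF]
      exact h5
    have hsub : {f : Sym2 (MAryVert m) | f ∈ (mAryTree m).edgeSet ∧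
        f ∉ (ord m).take (K + 1) ∧ ∃ x ∈ f, ∃ y ∈ rootE iF,
        (SimpleGraph.fromEdgeSet
          {g : Sym2 (MAryVert m) | g ∈ (ord m).take (K + 1)}).Reachable x y} ⊆ ↑Tr := by
      rintro f ⟨hfE, hfD, x, hxf, y, hye, hreach⟩
      have hxC : x ∈ C := mem_of_reachable_of_closed hclosed hreach (hyC y hye)
      rcases (edge_mem_iff f).mp hfE with ⟨i'', rfl⟩ | ⟨i'', j'', rfl⟩
      · have hilt : (iF : ℕ) < (i'' : ℕ) := by
          by_contra hnot
          push_neg at hnot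
          apply hfD
          apply (hDone _).mpr
          refine ⟨(m + 1) * (i'' : ℕ) + m, encode_lt i'' (Nat.lt_succ_self m), ?_,
            Ford_root i''⟩
          have hmul : (m + 1) * (i'' : ℕ) ≤ (m + 1) * (iF : ℕ) :=
            Nat.mul_le_mul_left _ hnot
          omega
        exact Finset.mem_coe.mpr (Finset.mem_image.mpr
          ⟨i'', Finset.mem_filter.mpr ⟨Finset.mem_univ _, hilt⟩, rfl⟩)
      · exfalso
        have hile : (i'' : ℕ) ≤ (iF : ℕ) := by
          rw [leafE, Sym2.mem_iff] at hxf
          rcases hxf with rfl | rfl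
          · rcases hxC with h | ⟨i', hi'le, h | ⟨j, h⟩⟩
            · simp at h
            · simp only [Option.some_inj, Sum.inl.injEq] at h
              rw [h]; exact hi'le
            · simp at h
          · rcases hxC with h | ⟨i', hi'le, h | ⟨j, h⟩⟩
            · simp at h
            · simp at h
            · simp only [Option.some_inj, Sum.inr.injEq, Prod.mk.injEq] at h
              rw [h.1]; exact hi'le
        apply hfD
        apply (hDone _).mpr
        refine ⟨(m + 1) * (i'' : ℕ) + (j'' : ℕ),
          encode_lt i'' (lt_trans j''.2 (Nat.lt_succ_self m)), ?_, Ford_leaf i'' j''⟩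
        have hmul : (m + 1) * (i'' : ℕ) ≤ (m + 1) * (iF : ℕ) := Nat.mul_le_mul_left _ hile
        have : (j'' : ℕ) < m := j''.2
        omega
    calc Set.ncard _ ≤ (↑Tr : Set (Sym2 (MAryVert m))).ncard :=
          Set.ncard_le_ncard hsub (Set.toFinite _)
      _ = Tr.card := Set.ncard_coe_finset _
      _ ≤ m := by
          have h2 : Tr.card ≤ (Finset.univ.filter
              fun i' : Fin m => (iF : ℕ) < (i' : ℕ)).card := Finset.card_image_le
          have h4 := Finset.card_le_card (Finset.filter_subset
              (fun i' : Fin m => (iF : ℕ) < (i' : ℕ)) Finset.univ)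
          simp only [Finset.card_univ, Fintype.card_fin] at h4
          omega

/-- For `m ≥ 2`, the complete `m`-ary tree of depth 2 has treewidth 1
and contraction complexity `m`. -/
theorem treewidth_and_cc_mAryTree (m : ℕ) (hm : 2 ≤ m) :
    treewidth (mAryTree m) = 1 ∧ cc (mAryTree m) = m := by
  refine ⟨treewidth_mAry m hm, ?_⟩
  have hle := ord_complexity_le m hm
  have hge := cc_lower m hm (ord m) (ord_isEdgeOrder m)
  have heqc : listComplexity (mAryTree m) (ord m) = m := le_antisymm hle hge
  apply le_antisymm
  · exact Nat.sInf_le ⟨ord m, ord_isEdgeOrder m, heqc⟩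
  · apply le_csInf
    · exact ⟨m, ord m, ord_isEdgeOrder m, heqc⟩
    rintro n ⟨l, hl, rfl⟩
    exact cc_lower m hm l hl
end
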